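/- arXiv:math/0211221 — 3 statements merged into one kernel-verified Lean document; each statement's English description precedes it below -/
import Mathlib

section
/- Let H be a complex Hilbert space and let φ : 𝒟(H) → 𝒟(H) be a bijective map which preserves the trace-norm distance and satisfies φ(0) = 0. Then φ preserves orthogonality in both directions: for all X, Y ∈ 𝒟(H), XY = 0 if and only if φ(X)φ(Y) = 0. -/
/-!
Common framework: operators on a complex Hilbert space `H`, the trace (computed in a
fixed orthonormal basis, which is basis-independent for positive operators), the set
`𝒟(H)` of density operators (positive trace-class operators), the set `S(H)` of states
(density operators of trace one), the trace norm `‖·‖₁`, the fidelity and the Bures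
metric.
-/

set_option synthInstance.maxHeartbeats 1000000
set_option maxHeartbeats 1000000

open scoped InnerProductSpace

noncomputable section

variable (H : Type*) [NormedAddCommGroup H] [InnerProductSpace ℂ H] [CompleteSpace H]

/-- The vectors of a fixed Hilbert (orthonormal) basis of `H`. -/
def hilbertBasisVectors : Set H := (exists_hilbertBasis ℂ H).choose

variable {H}

/-- The trace of an operator, computed as the sum of its diagonal entries in the fixed
orthonormal basis.  For positive trace-class operators this is the usual trace (which is
independent of the chosen basis). -/
def opTrace (T : H →L[ℂ] H) : ℝ :=
  ∑' e : hilbertBasisVectors H, (inner ℂ (e : H) (T e) : ℂ).re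

/-- `T` has a summable diagonal in the fixed orthonormal basis.  For positive operators
this says exactly that `T` is trace class. -/
def TraceSummable (T : H →L[ℂ] H) : Prop :=
  Summable fun e : hilbertBasisVectors H => (inner ℂ (e : H) (T e) : ℂ).re

variable (H)

/-- `𝒟(H)`: the set of density operators, i.e. positive trace-class operators on `H`. -/
def densityOps : Set (H →L[ℂ] H) := {T | T.IsPositive ∧ TraceSummable T}

/-- `S(H)`: the set of states, i.e. positive trace-class operators of trace one. -/
def states : Set (H →L[ℂ] H) := {T | T ∈ densityOps H ∧ opTrace T = 1}

variable {H}

/-- The square root of a (positive) operator, via the continuous functional calculus. -/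
def opSqrt (T : H →L[ℂ] H) : H →L[ℂ] H := CFC.sqrt T

/-- The absolute value `|T| = (T*T)^{1/2}` of an operator. -/
def opAbs (T : H →L[ℂ] H) : H →L[ℂ] H := CFC.sqrt (star T * T)

/-- The trace norm `‖T‖₁ = tr |T|`. -/
def traceNorm (T : H →L[ℂ] H) : ℝ := opTrace (opAbs T)

/-- The fidelity `F(A,B) = tr ((A^{1/2} B A^{1/2})^{1/2})`. -/
def fidelity (A B : H →L[ℂ] H) : ℝ := opTrace (opSqrt (opSqrt A * B * opSqrt A))

/-- The Bures distance `d_b(A,B) = (tr A + tr B - 2 F(A,B))^{1/2}`. -/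
def buresDist (A B : H →L[ℂ] H) : ℝ := Real.sqrt (opTrace A + opTrace B - 2 * fidelity A B)

/-- The closed ball `B^b_ε(A)` of radius `ε` around `A` in `𝒟(H)` for the Bures metric. -/
def buresBall (A : H →L[ℂ] H) (ε : ℝ) : Set (H →L[ℂ] H) :=
  {X ∈ densityOps H | buresDist X A ≤ ε}

/-- The diameter of the Bures ball `B^b_ε(A)`: the supremum of the Bures distances
between its elements. -/
def buresBallDiam (A : H →L[ℂ] H) (ε : ℝ) : ℝ :=
  sSup {r : ℝ | ∃ X ∈ buresBall A ε, ∃ Y ∈ buresBall A ε, r = buresDist X Y}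

/-- The closed ball `B¹_ε(A)` of radius `ε` around `A` in `𝒟(H)` for the trace-norm
metric. -/
def traceNormBall (A : H →L[ℂ] H) (ε : ℝ) : Set (H →L[ℂ] H) :=
  {X ∈ densityOps H | traceNorm (X - A) ≤ ε}

/-- `P` is a rank-one (orthogonal) projection. -/
def IsRankOneProjection (P : H →L[ℂ] H) : Prop :=
  IsSelfAdjoint P ∧ P * P = P ∧ Module.finrank ℂ (LinearMap.range (P : H →ₗ[ℂ] H)) = 1

/-- The orthocomplement of a subset of `𝒟(H)` with respect to the orthogonality
relation `X ⊥ Y ↔ XY = 0`. -/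
def densPerp (M : Set (H →L[ℂ] H)) : Set (H →L[ℂ] H) :=
  {X ∈ densityOps H | ∀ Y ∈ M, X * Y = 0}

end


open scoped ENNReal NNReal

noncomputable section
variable {H : Type*} [NormedAddCommGroup H] [InnerProductSpace ℂ H] [CompleteSpace H]

namespace TNAux

variable (H) in
/-- The fixed Hilbert basis. -/
def hB : HilbertBasis (hilbertBasisVectors H) ℂ H := (exists_hilbertBasis ℂ H).choose_spec.choose

lemma hB_apply (e : hilbertBasisVectors H) : hB H e = (e : H) :=
  congrFun (exists_hilbertBasis ℂ H).choose_spec.choose_spec e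

lemma enormsq {E : Type*} [NormedAddCommGroup E] (x : E) :
    (‖x‖₊ : ℝ≥0∞) ^ 2 = ENNReal.ofReal (‖x‖ ^ 2) := by
  rw [ENNReal.ofReal_pow (norm_nonneg _), ← coe_nnnorm, ENNReal.ofReal_coe_nnreal]

lemma hasSum_sq_inner (x : H) :
    HasSum (fun e : hilbertBasisVectors H => (‖⟪(e : H), x⟫_ℂ‖ ^ 2 : ℝ)) (‖x‖ ^ 2) := by
  have h := (hB H).hasSum_inner_mul_inner x x
  have h2 : HasSum (fun e : hilbertBasisVectors H => ((‖⟪(e:H), x⟫_ℂ‖ ^ 2 : ℝ) : ℂ))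
      ((‖x‖ ^ 2 : ℝ) : ℂ) := by
    have hf : (fun e : hilbertBasisVectors H => ((‖⟪(e:H), x⟫_ℂ‖ ^ 2 : ℝ) : ℂ))
        = fun i => ⟪x, (hB H) i⟫_ℂ * ⟪(hB H) i, x⟫_ℂ := by
      funext e
      rw [hB_apply, ← inner_conj_symm x (e : H), mul_comm, Complex.mul_conj,
        Complex.normSq_eq_norm_sq]
    have hv : ((‖x‖ ^ 2 : ℝ) : ℂ) = ⟪x, x⟫_ℂ := by
      rw [inner_self_eq_norm_sq_to_K]
      norm_cast
    rw [hf, hv]; exact h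
  exact Complex.hasSum_ofReal.mp h2

lemma esum_sq_inner (x : H) :
    ∑' e : hilbertBasisVectors H, (‖⟪(e : H), x⟫_ℂ‖₊ : ℝ≥0∞) ^ 2 = (‖x‖₊ : ℝ≥0∞) ^ 2 := by
  have h := hasSum_sq_inner x
  calc ∑' e : hilbertBasisVectors H, (‖⟪(e : H), x⟫_ℂ‖₊ : ℝ≥0∞) ^ 2
      = ∑' e : hilbertBasisVectors H, ENNReal.ofReal (‖⟪(e : H), x⟫_ℂ‖ ^ 2) := by
        simp only [enormsq]
    _ = ENNReal.ofReal (∑' e : hilbertBasisVectors H, ‖⟪(e : H), x⟫_ℂ‖ ^ 2) :=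
        (ENNReal.ofReal_tsum_of_nonneg (fun _ => sq_nonneg _) h.summable).symm
    _ = ENNReal.ofReal (‖x‖ ^ 2) := by rw [h.tsum_eq]
    _ = (‖x‖₊ : ℝ≥0∞) ^ 2 := (enormsq x).symm

/-- The (extended) Hilbert–Schmidt norm squared, computed in the fixed basis. -/
def ehs (A : H →L[ℂ] H) : ℝ≥0∞ := ∑' e : hilbertBasisVectors H, (‖A e‖₊ : ℝ≥0∞) ^ 2

lemma ehs_star (A : H →L[ℂ] H) : ehs (star A) = ehs A := by
  have key : ∀ B : H →L[ℂ] H, ehs B =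
      ∑' (f : hilbertBasisVectors H) (e : hilbertBasisVectors H),
        (‖⟪(f : H), B e⟫_ℂ‖₊ : ℝ≥0∞) ^ 2 := by
    intro B
    rw [ENNReal.tsum_comm]
    exact tsum_congr fun e => (esum_sq_inner (B e)).symm
  rw [key, key A, ENNReal.tsum_comm]
  congr 1; ext f; congr 1; ext e
  congr 2
  rw [ContinuousLinearMap.star_eq_adjoint, ← inner_conj_symm ((e : H)),
    ContinuousLinearMap.adjoint_inner_left]
  exact NNReal.coe_injective (by simpa using norm_inner_symm (𝕜 := ℂ) (A (e:H)) ((f:H)))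

lemma ehs_eq_zero {A : H →L[ℂ] H} (h : ehs A = 0) : A = 0 := by
  have h' : ∀ e : hilbertBasisVectors H, A e = 0 := by
    intro e
    have := ENNReal.tsum_eq_zero.mp h e
    simpa using this
  have htop : (Submodule.span ℂ (Set.range ⇑(hB H))).topologicalClosure = ⊤ :=
    (hB H).dense_span
  have heq : ∀ x ∈ (Submodule.span ℂ (Set.range (hB H)) : Submodule ℂ H), A x = 0 := by
    intro x hx
    induction hx using Submodule.span_induction with
    | mem x hx => obtain ⟨e, rfl⟩ := hx; rw [hB_apply]; exact h' e
    | zero => simp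
    | add x y _ _ hx hy => simp [hx, hy]
    | smul c x _ hx => simp [hx]
  ext x
  have hx : x ∈ closure ((Submodule.span ℂ (Set.range ⇑(hB H))) : Set H) := by
    have : x ∈ (Submodule.span ℂ (Set.range ⇑(hB H))).topologicalClosure := htop ▸ Submodule.mem_top
    exact this
  have hclosed : IsClosed {y : H | A y = 0} := isClosed_eq A.continuous continuous_const
  have := closure_minimal (fun y hy => heq y hy) hclosed hx
  exact this

open ContinuousLinearMap in
lemma inner_pos_re {X : H →L[ℂ] H} (hX : (0:H→L[ℂ]H) ≤ X) (x : H) :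
    (⟪x, X x⟫_ℂ).re = ‖opSqrt X x‖ ^ 2 := by
  have hs : opSqrt X * opSqrt X = X := CFC.sqrt_mul_sqrt_self X hX
  have hsa : IsSelfAdjoint (opSqrt X) :=
    ((ContinuousLinearMap.nonneg_iff_isPositive _).mp (CFC.sqrt_nonneg (a := X))).isSelfAdjoint
  have h1 : ⟪x, X x⟫_ℂ = ⟪opSqrt X x, opSqrt X x⟫_ℂ := by
    conv_lhs => rw [← hs]
    rw [ContinuousLinearMap.mul_apply,
      ← ContinuousLinearMap.adjoint_inner_left (opSqrt X) (opSqrt X x) x, hsa.adjoint_eq]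
  rw [h1, inner_self_eq_norm_sq_to_K]
  norm_cast

/-- Diagonal "trace" in `ℝ≥0∞`. -/
def dtr (M : H →L[ℂ] H) : ℝ≥0∞ :=
  ∑' e : hilbertBasisVectors H, ENNReal.ofReal (⟪(e:H), M e⟫_ℂ).re

lemma dtr_pos_eq_ehs {X : H →L[ℂ] H} (hX : (0:H→L[ℂ]H) ≤ X) : dtr X = ehs (opSqrt X) := by
  refine tsum_congr fun e => ?_
  rw [inner_pos_re hX, enormsq]

lemma dtr_conj {X : H →L[ℂ] H} (hX : (0:H→L[ℂ]H) ≤ X) (C : H →L[ℂ] H) :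
    dtr (star C * X * C) = ehs (opSqrt X * C) := by
  refine tsum_congr fun e => ?_
  have h1 : ⟪(e:H), (star C * X * C) e⟫_ℂ = ⟪C e, X (C e)⟫_ℂ := by
    rw [ContinuousLinearMap.mul_apply, ContinuousLinearMap.mul_apply,
      ContinuousLinearMap.star_eq_adjoint, ContinuousLinearMap.adjoint_inner_right]
  rw [h1, inner_pos_re hX, enormsq, ContinuousLinearMap.mul_apply]

lemma dtr_add {M N : H →L[ℂ] H} (hM : M.IsPositive) (hN : N.IsPositive) :
    dtr (M + N) = dtr M + dtr N := by
  unfold dtr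
  rw [← ENNReal.tsum_add]
  refine tsum_congr fun e => ?_
  rw [ContinuousLinearMap.add_apply, inner_add_right, Complex.add_re]
  exact ENNReal.ofReal_add (hM.re_inner_nonneg_right _) (hN.re_inner_nonneg_right _)

lemma ofReal_opTrace {M : H →L[ℂ] H} (hM : M.IsPositive) (hsum : TraceSummable M) :
    ENNReal.ofReal (opTrace M) = dtr M :=
  ENNReal.ofReal_tsum_of_nonneg (fun e => hM.re_inner_nonneg_right _) hsum

lemma opTrace_nonneg {M : H →L[ℂ] H} (hM : M.IsPositive) : 0 ≤ opTrace M :=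
  tsum_nonneg fun e => hM.re_inner_nonneg_right _

lemma traceSummable_of_dtr_ne_top {M : H →L[ℂ] H} (hM : M.IsPositive) (h : dtr M ≠ ⊤) :
    TraceSummable M := by
  have h2 := ENNReal.summable_toReal h
  exact h2.congr fun e => ENNReal.toReal_ofReal (hM.re_inner_nonneg_right _)

lemma dtr_ne_top {M : H →L[ℂ] H} (hM : M.IsPositive) (hsum : TraceSummable M) :
    dtr M ≠ ⊤ := by
  rw [← ofReal_opTrace hM hsum]; exact ENNReal.ofReal_ne_top

lemma opTrace_add {M N : H →L[ℂ] H} (hM : TraceSummable M) (hN : TraceSummable N) :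
    opTrace (M + N) = opTrace M + opTrace N := by
  unfold opTrace
  rw [← Summable.tsum_add hM hN]
  exact tsum_congr fun e => by
    rw [ContinuousLinearMap.add_apply, inner_add_right, Complex.add_re]

lemma ehs_proj (K : Submodule ℂ H) [K.HasOrthogonalProjection] (s : H →L[ℂ] H) :
    ehs ((K.subtypeL ∘L K.orthogonalProjectionOnto) * s)
      + ehs ((1 - K.subtypeL ∘L K.orthogonalProjectionOnto) * s) = ehs s := by
  unfold ehs
  rw [← ENNReal.tsum_add]
  refine tsum_congr fun e => ?_
  set u := s e with hu
  have h1 : ((K.subtypeL ∘L K.orthogonalProjectionOnto) * s) e = (K.orthogonalProjectionOnto u : H) := rfl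
  have h2 : ((1 - K.subtypeL ∘L K.orthogonalProjectionOnto) * s) e
      = u - (K.orthogonalProjectionOnto u : H) := rfl
  have hperp : ⟪(K.orthogonalProjectionOnto u : H), u - (K.orthogonalProjectionOnto u : H)⟫_ℂ = 0 :=
    (Submodule.mem_orthogonal _ _).mp (K.sub_starProjection_mem_orthogonal u) _
      (K.orthogonalProjectionOnto u).2
  have hpyth : ‖u‖ ^ 2 = ‖(K.orthogonalProjectionOnto u : H)‖ ^ 2
      + ‖u - (K.orthogonalProjectionOnto u : H)‖ ^ 2 := by
    have := norm_add_sq_eq_norm_sq_add_norm_sq_of_inner_eq_zero _ _ hperp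
    simpa [pow_two] using this
  rw [h1, h2, enormsq, enormsq, enormsq, ← ENNReal.ofReal_add (sq_nonneg _) (sq_nonneg _),
    ← hpyth]

lemma star_trick {P A : H →L[ℂ] H} (hP : IsSelfAdjoint P) (hA : IsSelfAdjoint A)
    {B : H →L[ℂ] H} (hB : IsSelfAdjoint B) (h : P * A = B) : A * P = B := by
  have := congrArg star h
  rwa [star_mul, hP.star_eq, hA.star_eq, hB.star_eq] at this

lemma opAbs_of_nonneg {X : H →L[ℂ] H} (hX : (0:H→L[ℂ]H) ≤ X) : opAbs X = X := by
  have hsa : IsSelfAdjoint X := IsSelfAdjoint.of_nonneg hX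
  unfold opAbs
  rw [hsa.star_eq, CFC.sqrt_mul_self X hX]

lemma opAbs_orth {X Y : H →L[ℂ] H} (hX : (0:H→L[ℂ]H) ≤ X) (hY : (0:H→L[ℂ]H) ≤ Y)
    (hXY : X * Y = 0) : opAbs (X - Y) = X + Y := by
  have hsaX : IsSelfAdjoint X := IsSelfAdjoint.of_nonneg hX
  have hsaY : IsSelfAdjoint Y := IsSelfAdjoint.of_nonneg hY
  have hYX : Y * X = 0 := by
    have := congrArg star hXY
    rwa [star_mul, hsaX.star_eq, hsaY.star_eq, star_zero] at this
  have hsub : star (X - Y) = X - Y := (hsaX.sub hsaY).star_eq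
  have hkey : (X - Y) * (X - Y) = (X + Y) * (X + Y) := by
    have e1 : (X - Y) * (X - Y) = X*X - X*Y - Y*X + Y*Y := by noncomm_ring
    have e2 : (X + Y) * (X + Y) = X*X + X*Y + Y*X + Y*Y := by noncomm_ring
    rw [e1, e2, hXY, hYX]
    abel
  unfold opAbs
  rw [hsub, hkey, CFC.sqrt_mul_self _ (add_nonneg hX hY)]

lemma opAbs_eq_posPart_add_negPart {T : H →L[ℂ] H} (hT : IsSelfAdjoint T) :
    opAbs T = T⁺ + T⁻ := by
  have hp : (0:H→L[ℂ]H) ≤ T⁺ := CFC.posPart_nonneg T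
  have hn : (0:H→L[ℂ]H) ≤ T⁻ := CFC.negPart_nonneg T
  have e1 : T⁺ * T⁻ = 0 := CFC.posPart_mul_negPart T
  have e2 : T⁻ * T⁺ = 0 := CFC.negPart_mul_posPart T
  have h1 : star T * T = (T⁺ + T⁻) * (T⁺ + T⁻) := by
    rw [hT.star_eq]
    conv_lhs => rw [← CFC.posPart_sub_negPart T hT]
    have e3 : (T⁺ - T⁻) * (T⁺ - T⁻) = T⁺*T⁺ - T⁺*T⁻ - T⁻*T⁺ + T⁻*T⁻ := by noncomm_ring
    have e4 : (T⁺ + T⁻) * (T⁺ + T⁻) = T⁺*T⁺ + T⁺*T⁻ + T⁻*T⁺ + T⁻*T⁻ := by noncomm_ring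
    rw [e3, e4, e1, e2]
    abel
  unfold opAbs
  rw [h1, CFC.sqrt_mul_self _ (add_nonneg hp hn)]

lemma dtr_conj_eq_zero {M C : H →L[ℂ] H} (hM : (0:H→L[ℂ]H) ≤ M) (hC : IsSelfAdjoint C)
    (h : dtr (C * M * C) = 0) : M * C = 0 := by
  have h1 : dtr (star C * M * C) = ehs (opSqrt M * C) := dtr_conj hM C
  rw [hC.star_eq] at h1
  have h2 : opSqrt M * C = 0 := ehs_eq_zero (by rw [← h1, h])
  have hs : opSqrt M * opSqrt M = M := CFC.sqrt_mul_sqrt_self M hM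
  calc M * C = opSqrt M * (opSqrt M * C) := by rw [← mul_assoc, hs]
    _ = 0 := by rw [h2, mul_zero]

lemma dtr_conj_self {X P : H →L[ℂ] H} (hX : (0:H→L[ℂ]H) ≤ X) (hP : IsSelfAdjoint P) :
    dtr (P * X * P) = ehs (P * opSqrt X) := by
  have hsX : IsSelfAdjoint (opSqrt X) := IsSelfAdjoint.of_nonneg (CFC.sqrt_nonneg (a := X))
  have h1 : dtr (star P * X * P) = ehs (opSqrt X * P) := dtr_conj hX P
  rw [hP.star_eq] at h1
  rw [h1, ← ehs_star (P * opSqrt X), star_mul, hP.star_eq, hsX.star_eq]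

lemma exists_proj {X Y : H →L[ℂ] H} (hX : X.IsPositive) (hY : Y.IsPositive) :
    ∃ P : H →L[ℂ] H, IsSelfAdjoint P ∧
      (X - Y)⁺ + P * Y * P = P * X * P ∧
      dtr (P * X * P) + dtr ((1 - P) * X * (1 - P)) = dtr X ∧
      dtr (P * Y * P) + dtr ((1 - P) * Y * (1 - P)) = dtr Y := by
  have hX0 : (0:H→L[ℂ]H) ≤ X := (ContinuousLinearMap.nonneg_iff_isPositive X).mpr hX
  have hY0 : (0:H→L[ℂ]H) ≤ Y := (ContinuousLinearMap.nonneg_iff_isPositive Y).mpr hY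
  set T := X - Y with hTdef
  have hTsa : IsSelfAdjoint T := hX.isSelfAdjoint.sub hY.isSelfAdjoint
  set A := T⁺ with hAdef
  set Bm := T⁻ with hBmdef
  have hA0 : (0:H→L[ℂ]H) ≤ A := CFC.posPart_nonneg T
  have hBm0 : (0:H→L[ℂ]H) ≤ Bm := CFC.negPart_nonneg T
  have hAsa : IsSelfAdjoint A := IsSelfAdjoint.of_nonneg hA0
  have hBmsa : IsSelfAdjoint Bm := IsSelfAdjoint.of_nonneg hBm0
  set K : Submodule ℂ H := (LinearMap.range (A : H →ₗ[ℂ] H)).topologicalClosure with hKdef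
  haveI : CompleteSpace K := (LinearMap.range (A : H →ₗ[ℂ] H)).isClosed_topologicalClosure.completeSpace_coe
  set P : H →L[ℂ] H := K.subtypeL ∘L K.orthogonalProjectionOnto with hPdef
  have hPsa : IsSelfAdjoint P := isSelfAdjoint_starProjection K
  have hPapply : ∀ u : H, P u = (K.orthogonalProjectionOnto u : H) := fun u => rfl
  have hranA : ∀ x : H, A x ∈ K :=
    fun x => Submodule.le_topologicalClosure _ (LinearMap.mem_range_self (A : H →ₗ[ℂ] H) x)
  have hPA : P * A = A := by
    ext x
    rw [ContinuousLinearMap.mul_apply, hPapply]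
    exact Submodule.starProjection_eq_self_iff.mpr (hranA x)
  have hAP : A * P = A := star_trick hPsa hAsa hAsa hPA
  have hPBm : P * Bm = 0 := by
    ext x
    rw [ContinuousLinearMap.mul_apply, hPapply]
    have hmem : Bm x ∈ Kᗮ := by
      rw [Submodule.mem_orthogonal]
      intro u hu
      have hsubset : ((LinearMap.range (A : H →ₗ[ℂ] H) : Submodule ℂ H) : Set H)
          ⊆ {v : H | ⟪v, Bm x⟫_ℂ = 0} := by
        rintro v ⟨y, rfl⟩
        show ⟪A y, Bm x⟫_ℂ = 0
        rw [← hAsa.adjoint_eq, ContinuousLinearMap.adjoint_inner_left]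
        have : A (Bm x) = (A * Bm) x := rfl
        rw [this, CFC.posPart_mul_negPart T]
        simp
      have hclosed : IsClosed {v : H | ⟪v, Bm x⟫_ℂ = 0} :=
        isClosed_eq (Continuous.inner continuous_id continuous_const) continuous_const
      have hu' : u ∈ closure ((LinearMap.range (A : H →ₗ[ℂ] H) : Submodule ℂ H) : Set H) := by
        rw [← Submodule.topologicalClosure_coe]
        exact hu
      exact closure_minimal hsubset hclosed hu'
    rw [Submodule.orthogonalProjectionOnto_apply_of_mem_orthogonal hmem]
    simp
  have hBmP : Bm * P = 0 := star_trick hPsa hBmsa (by simp [IsSelfAdjoint]) hPBm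
  have hPTP : P * T * P = A := by
    have h1 : P * T * P = P*A*P - P*Bm*P := by
      conv_lhs => rw [← CFC.posPart_sub_negPart T hTsa]
      noncomm_ring
    have h2 : P*A*P = A := by rw [hPA, hAP]
    have h3 : P*Bm*P = 0 := by rw [hPBm, zero_mul]
    rw [h1, h2, h3, sub_zero]
  have hid : A + P * Y * P = P * X * P := by
    have h2 : P * T * P = P * X * P - P * Y * P := by
      rw [hTdef]; noncomm_ring
    rw [← hPTP, h2]
    abel
  have hsXsa : IsSelfAdjoint (opSqrt X) := IsSelfAdjoint.of_nonneg (CFC.sqrt_nonneg (a := X))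
  have h1Psa : IsSelfAdjoint (1 - P) := (IsSelfAdjoint.one (H →L[ℂ] H)).sub hPsa
  have pyth : ∀ (M : H →L[ℂ] H), (0:H→L[ℂ]H) ≤ M →
      dtr (P * M * P) + dtr ((1 - P) * M * (1 - P)) = dtr M := by
    intro M hM0
    rw [dtr_conj_self hM0 hPsa, dtr_conj_self hM0 h1Psa, dtr_pos_eq_ehs hM0]
    exact ehs_proj K (opSqrt M)
  exact ⟨P, hPsa, hid, pyth X hX0, pyth Y hY0⟩

lemma traceNorm_pos_eq {X : H →L[ℂ] H} (hX : (0:H→L[ℂ]H) ≤ X) : traceNorm X = opTrace X := by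
  unfold traceNorm
  rw [opAbs_of_nonneg hX]

lemma orth_forward {X Y : H →L[ℂ] H} (hX : X ∈ densityOps H) (hY : Y ∈ densityOps H)
    (h : X * Y = 0) : traceNorm (X - Y) = traceNorm X + traceNorm Y := by
  have hX0 : (0:H→L[ℂ]H) ≤ X := (ContinuousLinearMap.nonneg_iff_isPositive X).mpr hX.1
  have hY0 : (0:H→L[ℂ]H) ≤ Y := (ContinuousLinearMap.nonneg_iff_isPositive Y).mpr hY.1
  rw [traceNorm_pos_eq hX0, traceNorm_pos_eq hY0]
  unfold traceNorm
  rw [opAbs_orth hX0 hY0 h, opTrace_add hX.2 hY.2]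

lemma conj_isPositive {M C : H →L[ℂ] H} (hM : M.IsPositive) (hC : IsSelfAdjoint C) :
    (C * M * C).IsPositive := by
  have h := hM.conj_adjoint C
  rw [hC.adjoint_eq] at h
  have : C ∘L M ∘L C = C * M * C := (mul_assoc C M C).symm
  rwa [this] at h

lemma orth_reverse {X Y : H →L[ℂ] H} (hX : X ∈ densityOps H) (hY : Y ∈ densityOps H)
    (h : traceNorm (X - Y) = traceNorm X + traceNorm Y) : X * Y = 0 := by
  obtain ⟨hXp, hXs⟩ := hX
  obtain ⟨hYp, hYs⟩ := hY
  have hX0 : (0:H→L[ℂ]H) ≤ X := (ContinuousLinearMap.nonneg_iff_isPositive X).mpr hXp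
  have hY0 : (0:H→L[ℂ]H) ≤ Y := (ContinuousLinearMap.nonneg_iff_isPositive Y).mpr hYp
  have hTsa : IsSelfAdjoint (X - Y) := hXp.isSelfAdjoint.sub hYp.isSelfAdjoint
  set A := (X - Y)⁺ with hAdef
  set Bm := (X - Y)⁻ with hBmdef
  have hA0 : (0:H→L[ℂ]H) ≤ A := CFC.posPart_nonneg (X - Y)
  have hBm0 : (0:H→L[ℂ]H) ≤ Bm := CFC.negPart_nonneg (X - Y)
  have hAp : A.IsPositive := (ContinuousLinearMap.nonneg_iff_isPositive A).mp hA0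
  have hBmp : Bm.IsPositive := (ContinuousLinearMap.nonneg_iff_isPositive Bm).mp hBm0
  have hdX : dtr X ≠ ⊤ := dtr_ne_top hXp hXs
  have hdY : dtr Y ≠ ⊤ := dtr_ne_top hYp hYs
  obtain ⟨P, hPsa, hid, hpX, hpY⟩ := exists_proj hXp hYp
  have hPYPp : (P * Y * P).IsPositive := conj_isPositive hYp hPsa
  have hPXPp : (P * X * P).IsPositive := conj_isPositive hXp hPsa
  -- dtr A + dtr (P*Y*P) = dtr (P*X*P)
  have hsum1 : dtr A + dtr (P * Y * P) = dtr (P * X * P) := by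
    rw [← dtr_add hAp hPYPp, hid]
  have hPXP_le : dtr (P * X * P) ≤ dtr X := by
    rw [← hpX]; exact le_self_add
  have hA_le : dtr A ≤ dtr X := le_trans (le_trans le_self_add hsum1.le) hPXP_le
  -- Bm side via symmetry
  have hBm_le : dtr Bm ≤ dtr Y := by
    obtain ⟨Q, hQsa, hidQ, hqY, hqX⟩ := exists_proj hYp hXp
    have hBmmatch : (Y - X)⁺ = Bm := by
      rw [hBmdef, ← CFC.posPart_neg (X - Y), neg_sub]
    rw [hBmmatch] at hidQ
    have hQXQp : (Q * X * Q).IsPositive := conj_isPositive hXp hQsa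
    have hsum2 : dtr Bm + dtr (Q * X * Q) = dtr (Q * Y * Q) := by
      rw [← dtr_add hBmp hQXQp, hidQ]
    have : dtr (Q * Y * Q) ≤ dtr Y := by
      rw [← hqY]; exact le_self_add
    exact le_trans (le_trans le_self_add hsum2.le) this
  have hdA : dtr A ≠ ⊤ := (lt_of_le_of_lt hA_le (lt_top_iff_ne_top.mpr hdX)).ne
  have hdBm : dtr Bm ≠ ⊤ := (lt_of_le_of_lt hBm_le (lt_top_iff_ne_top.mpr hdY)).ne
  have hAsum : TraceSummable A := traceSummable_of_dtr_ne_top hAp hdA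
  have hBmsum : TraceSummable Bm := traceSummable_of_dtr_ne_top hBmp hdBm
  -- rewrite the hypothesis
  have habs : opAbs (X - Y) = A + Bm := opAbs_eq_posPart_add_negPart hTsa
  have hh : opTrace A + opTrace Bm = opTrace X + opTrace Y := by
    rw [traceNorm_pos_eq hX0, traceNorm_pos_eq hY0] at h
    unfold traceNorm at h
    rw [habs, opTrace_add hAsum hBmsum] at h
    exact h
  have hh' : dtr A + dtr Bm = dtr X + dtr Y := by
    rw [← ofReal_opTrace hAp hAsum, ← ofReal_opTrace hBmp hBmsum,
      ← ofReal_opTrace hXp hXs, ← ofReal_opTrace hYp hYs,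
      ← ENNReal.ofReal_add (opTrace_nonneg hAp) (opTrace_nonneg hBmp),
      ← ENNReal.ofReal_add (opTrace_nonneg hXp) (opTrace_nonneg hYp), hh]
  -- deduce dtr A = dtr X
  have hAX : dtr A = dtr X := by
    have h1 : (dtr A).toReal ≤ (dtr X).toReal := ENNReal.toReal_mono hdX hA_le
    have h2 : (dtr Bm).toReal ≤ (dtr Y).toReal := ENNReal.toReal_mono hdY hBm_le
    have h3 : (dtr A).toReal + (dtr Bm).toReal = (dtr X).toReal + (dtr Y).toReal := by
      rw [← ENNReal.toReal_add hdA hdBm, ← ENNReal.toReal_add hdX hdY, hh']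
    have h4 : (dtr A).toReal = (dtr X).toReal := by linarith
    exact (ENNReal.toReal_eq_toReal_iff' hdA hdX).mp h4
  -- deduce dtr (P*Y*P) = 0
  have hPXP_eq : dtr (P * X * P) = dtr X := le_antisymm hPXP_le (by
    rw [← hAX]; exact le_trans le_self_add hsum1.le)
  have hPYP0 : dtr (P * Y * P) = 0 := by
    have : dtr A + dtr (P * Y * P) = dtr A + 0 := by
      rw [hsum1, hPXP_eq, ← hAX, add_zero]
    exact (ENNReal.add_right_inj hdA).mp this
  have hrest0 : dtr ((1 - P) * X * (1 - P)) = 0 := by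
    have : dtr (P * X * P) + dtr ((1 - P) * X * (1 - P)) = dtr (P * X * P) + 0 := by
      rw [hpX, hPXP_eq, add_zero]
    exact (ENNReal.add_right_inj (by rw [hPXP_eq]; exact hdX)).mp this
  have hYP : Y * P = 0 := dtr_conj_eq_zero hY0 hPsa hPYP0
  have h1Psa : IsSelfAdjoint (1 - P) := (IsSelfAdjoint.one (H →L[ℂ] H)).sub hPsa
  have hX1P : X * (1 - P) = 0 := dtr_conj_eq_zero hX0 h1Psa hrest0
  have hXP : X = X * P := by
    have := hX1P
    rw [mul_sub, mul_one, sub_eq_zero] at this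
    exact this
  have hPY : P * Y = 0 := by
    have := congrArg star hYP
    rwa [star_mul, hPsa.star_eq, hYp.isSelfAdjoint.star_eq, star_zero] at this
  calc X * Y = X * P * Y := by rw [← hXP]
    _ = X * (P * Y) := mul_assoc _ _ _
    _ = 0 := by rw [hPY, mul_zero]

lemma orth_iff {X Y : H →L[ℂ] H} (hX : X ∈ densityOps H) (hY : Y ∈ densityOps H) :
    X * Y = 0 ↔ traceNorm (X - Y) = traceNorm X + traceNorm Y :=
  ⟨orth_forward hX hY, orth_reverse hX hY⟩

end TNAux
end

/-- A bijective trace-norm isometry of `𝒟(H)` fixing `0` preserves orthogonality in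
both directions. -/
theorem traceNorm_isometry_preserves_orthogonality
    {H : Type*} [NormedAddCommGroup H] [InnerProductSpace ℂ H] [CompleteSpace H]
    (φ : (H →L[ℂ] H) → (H →L[ℂ] H))
    (hbij : Set.BijOn φ (densityOps H) (densityOps H))
    (hiso : ∀ A ∈ densityOps H, ∀ B ∈ densityOps H,
      traceNorm (φ A - φ B) = traceNorm (A - B))
    (h0 : φ 0 = 0) :
    ∀ X ∈ densityOps H, ∀ Y ∈ densityOps H, (X * Y = 0 ↔ φ X * φ Y = 0) := by
  intro X hX Y hY
  have h0mem : (0 : H →L[ℂ] H) ∈ densityOps H := by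
    refine ⟨ContinuousLinearMap.isPositive_zero, ?_⟩
    have hz : (fun e : hilbertBasisVectors H =>
        (inner ℂ (e : H) ((0 : H →L[ℂ] H) e) : ℂ).re) = fun _ => 0 := by
      funext e; simp
    show Summable _
    rw [hz]
    exact summable_zero
  have tn : ∀ Z ∈ densityOps H, traceNorm (φ Z) = traceNorm Z := by
    intro Z hZ
    have h' := hiso Z hZ 0 h0mem
    rwa [h0, sub_zero, sub_zero] at h'
  have hφX := hbij.mapsTo hX
  have hφY := hbij.mapsTo hY
  rw [TNAux.orth_iff hX hY, TNAux.orth_iff hφX hφY, hiso X hX Y hY, tn X hX, tn Y hY]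
end

section
/- Let H be a complex Hilbert space, let A ∈ 𝒟(H), and let n be a positive integer. Then A has rank n if and only if the double orthocomplement {A}^⊥⊥ (taken inside 𝒟(H) with respect to the orthogonality relation XY = 0) contains n pairwise orthogonal nonzero elements but does not contain n+1 pairwise orthogonal nonzero elements. -/
/-!
Common framework: operators on a complex Hilbert space `H`, the trace (computed in a
fixed orthonormal basis, which is basis-independent for positive operators), the set
`𝒟(H)` of density operators (positive trace-class operators), the set `S(H)` of states
(density operators of trace one), the trace norm `‖·‖₁`, the fidelity and the Bures
metric.
-/

set_option synthInstance.maxHeartbeats 1000000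
set_option maxHeartbeats 1000000

open scoped InnerProductSpace

noncomputable section Aux

open scoped InnerProductSpace

variable {H : Type*} [NormedAddCommGroup H] [InnerProductSpace ℂ H] [CompleteSpace H]

/-- The rank-one operator `x ↦ ⟪u, x⟫ • u`. -/
def projOf (u : H) : H →L[ℂ] H := (innerSL ℂ u).smulRight u

lemma projOf_apply (u x : H) : projOf u x = ⟪u, x⟫_ℂ • u := rfl

lemma projOf_isPositive (u : H) : (projOf u).IsPositive := by
  constructor
  · intro x y
    simp [projOf_apply, inner_smul_left, inner_smul_right, mul_comm]
  · intro x
    simp only [ContinuousLinearMap.reApplyInnerSelf, projOf_apply, inner_smul_left]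
    rw [mul_comm, Complex.mul_conj]
    simp [Complex.normSq_nonneg]

lemma projOf_traceSummable (u : H) : TraceSummable (projOf u) := by
  obtain ⟨b, hb⟩ := (exists_hilbertBasis ℂ H).choose_spec
  have horth : Orthonormal ℂ ((↑) : hilbertBasisVectors H → H) := hb ▸ b.orthonormal
  have hs := horth.inner_products_summable (x := u)
  refine hs.congr fun e => ?_
  rw [projOf_apply, inner_smul_right, ← inner_conj_symm ((e : H)) u, Complex.mul_conj]
  simp only [Complex.ofReal_pow, ← Complex.ofReal_pow, Complex.ofReal_re,
    Complex.normSq_eq_norm_sq, RCLike.norm_conj, norm_inner_symm]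

lemma projOf_mem_densityOps (u : H) : projOf u ∈ densityOps H :=
  ⟨projOf_isPositive u, projOf_traceSummable u⟩

lemma projOf_ne_zero {u : H} (hu : u ≠ 0) : projOf u ≠ 0 := by
  intro h
  have : projOf u u = 0 := by rw [h]; rfl
  rw [projOf_apply] at this
  rcases smul_eq_zero.mp this with h' | h'
  · exact hu (inner_self_eq_zero.mp h')
  · exact hu h'

lemma projOf_mul_projOf {u v : H} (h : ⟪u, v⟫_ℂ = 0) : projOf u * projOf v = 0 := by
  ext x
  show projOf u (projOf v x) = 0
  rw [projOf_apply, projOf_apply, inner_smul_right, h]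
  simp

lemma isSymmetric_of_mem_densityOps {Y : H →L[ℂ] H} (hY : Y ∈ densityOps H) :
    (Y : H →ₗ[ℂ] H).IsSymmetric :=
  hY.1.1

variable {A : H →L[ℂ] H}

lemma perp_apply_eq_zero {Y : H →L[ℂ] H} (hY : Y ∈ densPerp {A}) {u : H}
    (hu : u ∈ ((LinearMap.range (A : H →ₗ[ℂ] H))ᗮ)ᗮ) : Y u = 0 := by
  have hYA : Y * A = 0 := hY.2 A rfl
  have hker : (LinearMap.range (A : H →ₗ[ℂ] H)).topologicalClosure ≤
      LinearMap.ker (Y : H →ₗ[ℂ] H) := by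
    apply Submodule.topologicalClosure_minimal
    · rintro x ⟨w, rfl⟩
      show Y (A w) = 0
      have := congrArg (fun T : H →L[ℂ] H => T w) hYA
      simpa using this
    · exact ContinuousLinearMap.isClosed_ker Y
  have hu' : u ∈ (LinearMap.range (A : H →ₗ[ℂ] H)).topologicalClosure := by
    rw [← Submodule.orthogonal_orthogonal_eq_closure]; exact hu
  exact hker hu'

lemma projOf_mem_perpPerp {u : H}
    (hu : u ∈ ((LinearMap.range (A : H →ₗ[ℂ] H))ᗮ)ᗮ) :
    projOf u ∈ densPerp (densPerp ({A} : Set (H →L[ℂ] H))) := by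
  refine ⟨projOf_mem_densityOps u, ?_⟩
  intro Y hY
  have hYu : Y u = 0 := perp_apply_eq_zero hY hu
  ext x
  show projOf u (Y x) = 0
  rw [projOf_apply]
  have hsym := isSymmetric_of_mem_densityOps hY.1
  have h2 : ⟪u, Y x⟫_ℂ = 0 := by
    have := (hsym u x).symm
    simp only [ContinuousLinearMap.coe_coe] at this
    rw [this, hYu, inner_zero_left]
  rw [h2, zero_smul]

lemma apply_mem_of_mem_perpPerp {X : H →L[ℂ] H}
    (hX : X ∈ densPerp (densPerp ({A} : Set (H →L[ℂ] H)))) (x : H) :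
    X x ∈ ((LinearMap.range (A : H →ₗ[ℂ] H))ᗮ)ᗮ := by
  rw [Submodule.mem_orthogonal]
  intro w hw
  -- first: X w = 0
  have hXw : X w = 0 := by
    rcases eq_or_ne w 0 with rfl | hw0
    · simp
    · set u : H := (‖w‖⁻¹ : ℂ) • w with hu
      have hmem : projOf u ∈ densPerp ({A} : Set (H →L[ℂ] H)) := by
        refine ⟨projOf_mem_densityOps u, ?_⟩
        intro Z hZ
        rcases hZ with rfl
        ext y
        show projOf u (Z y) = 0
        rw [projOf_apply, hu, inner_smul_left]
        have h4 : ⟪w, Z y⟫_ℂ = 0 := by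
          rw [← inner_conj_symm, hw (Z y) ⟨y, rfl⟩, map_zero]
        rw [h4, mul_zero, zero_smul]
      have h0 : X * projOf u = 0 := hX.2 _ hmem
      have h1 : X (projOf u w) = 0 := by
        have := congrArg (fun T : H →L[ℂ] H => T w) h0
        simpa using this
      rw [projOf_apply, map_smul, hu, inner_smul_left, inner_self_eq_norm_sq_to_K] at h1
      have hc : (starRingEnd ℂ) (‖w‖⁻¹ : ℂ) * (‖w‖ : ℂ) ^ 2 ≠ 0 := by
        simp [Complex.conj_ofReal, hw0]
      have hXu : X u = 0 := by
        rcases smul_eq_zero.mp h1 with h' | h'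
        · exact absurd h' hc
        · exact h'
      have : X w = (‖w‖ : ℂ) • X u := by
        rw [← map_smul, hu, smul_smul]
        congr 1
        rw [mul_inv_cancel₀]
        · simp
        · simpa using hw0
      rw [this, hXu, smul_zero]
  have hsym := isSymmetric_of_mem_densityOps hX.1
  have h5 := hsym w x
  simp only [ContinuousLinearMap.coe_coe] at h5
  rw [← h5, hXw, inner_zero_left]

/-- From `k` pairwise orthogonal nonzero elements of `{A}^⊥⊥`, get an orthonormal family
of size `k` in `(ran A)ᗮᗮ`. -/
lemma exists_orthonormal_of_family {k : ℕ} (g : Fin k → (H →L[ℂ] H))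
    (h1 : ∀ i, g i ∈ densPerp (densPerp ({A} : Set (H →L[ℂ] H))))
    (h2 : ∀ i, g i ≠ 0) (h3 : ∀ i j, i ≠ j → g i * g j = 0) :
    ∃ u : Fin k → (((LinearMap.range (A : H →ₗ[ℂ] H))ᗮ)ᗮ : Submodule ℂ H),
      Orthonormal ℂ u := by
  have hx : ∀ i, ∃ x, g i x ≠ 0 := by
    intro i
    by_contra h
    push_neg at h
    exact h2 i (ContinuousLinearMap.ext fun x => by simpa using h x)
  choose x hxne using hx
  set W := (((LinearMap.range (A : H →ₗ[ℂ] H))ᗮ)ᗮ : Submodule ℂ H) with hWdef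
  let v : Fin k → W := fun i => ⟨g i (x i), apply_mem_of_mem_perpPerp (h1 i) (x i)⟩
  have hv0 : ∀ i, v i ≠ 0 := by
    intro i h
    exact hxne i (by simpa [v] using congrArg (Subtype.val) h)
  have hvorth : ∀ i j, i ≠ j → ⟪v i, v j⟫_ℂ = 0 := by
    intro i j hij
    have hsym := isSymmetric_of_mem_densityOps (h1 i).1
    have : ⟪g i (x i), g j (x j)⟫_ℂ = ⟪x i, g i (g j (x j))⟫_ℂ := hsym (x i) _
    have hz : g i (g j (x j)) = 0 := by
      have := congrArg (fun T : H →L[ℂ] H => T (x j)) (h3 i j hij)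
      simpa using this
    show ⟪g i (x i), g j (x j)⟫_ℂ = 0
    rw [this, hz, inner_zero_right]
  refine ⟨fun i => (‖v i‖⁻¹ : ℂ) • v i, ?_, ?_⟩
  · intro i
    exact norm_smul_inv_norm (hv0 i)
  · intro i j hij
    rw [inner_smul_left, inner_smul_right, hvorth i j hij, mul_zero, mul_zero]

/-- Conversely, an orthonormal family of size `k` in `(ran A)ᗮᗮ` gives `k` pairwise
orthogonal nonzero elements of `{A}^⊥⊥`. -/
lemma family_of_orthonormal {k : ℕ}
    (u : Fin k → (((LinearMap.range (A : H →ₗ[ℂ] H))ᗮ)ᗮ : Submodule ℂ H))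
    (hu : Orthonormal ℂ u) :
    ∃ g : Fin k → (H →L[ℂ] H),
      (∀ i, g i ∈ densPerp (densPerp ({A} : Set (H →L[ℂ] H)))) ∧ (∀ i, g i ≠ 0) ∧
      (∀ i j, i ≠ j → g i * g j = 0) := by
  refine ⟨fun i => projOf ((u i : H)), fun i => projOf_mem_perpPerp (u i).2, fun i => ?_,
    fun i j hij => ?_⟩
  · exact projOf_ne_zero (by simpa [Submodule.coe_eq_zero] using hu.ne_zero i)
  · apply projOf_mul_projOf
    exact hu.2 hij

/-- Gram–Schmidt packaged to avoid a stuck instance problem on `Fin k`. -/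
lemma exists_orthonormal_of_linearIndependent {k : ℕ} {E : Type*} [NormedAddCommGroup E]
    [InnerProductSpace ℂ E] {v : Fin k → E} (hv : LinearIndependent ℂ v) :
    ∃ u : Fin k → E, Orthonormal ℂ u :=
  letI instWF : WellFoundedLT (Fin k) := inferInstance
  ⟨InnerProductSpace.gramSchmidtNormed ℂ v,
    InnerProductSpace.gramSchmidtNormed_orthonormal hv⟩

end Aux

/-- For `A ∈ 𝒟(H)` and a positive integer `n`: `A` has rank `n` iff `{A}^⊥⊥` contains
`n` pairwise orthogonal nonzero elements but does not contain `n + 1` such elements. -/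
theorem rank_eq_iff_maximal_orthogonal_family
    {H : Type*} [NormedAddCommGroup H] [InnerProductSpace ℂ H] [CompleteSpace H]
    (A : H →L[ℂ] H) (hA : A ∈ densityOps H) (n : ℕ) (hn : 1 ≤ n) :
    Module.finrank ℂ (LinearMap.range (A : H →ₗ[ℂ] H)) = n ↔
      (∃ f : Fin n → (H →L[ℂ] H),
        (∀ i, f i ∈ densPerp (densPerp {A})) ∧ (∀ i, f i ≠ 0) ∧
        (∀ i j, i ≠ j → f i * f j = 0)) ∧
      ¬(∃ g : Fin (n + 1) → (H →L[ℂ] H),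
        (∀ i, g i ∈ densPerp (densPerp {A})) ∧ (∀ i, g i ≠ 0) ∧
        (∀ i j, i ≠ j → g i * g j = 0)) := by
  classical
  set K : Submodule ℂ H := LinearMap.range (A : H →ₗ[ℂ] H) with hKdef
  constructor
  · intro h
    haveI hfd : FiniteDimensional ℂ K := FiniteDimensional.of_finrank_pos (by rw [h]; omega)
    have hKc : IsClosed (K : Set H) := K.closed_of_finiteDimensional
    have hWK : Kᗮᗮ = K := le_antisymm
      (by rw [Submodule.orthogonal_orthogonal_eq_closure]
          exact K.topologicalClosure_minimal le_rfl hKc)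
      K.le_orthogonal_orthogonal
    constructor
    · -- existence of an n-family
      have e := (stdOrthonormalBasis ℂ K).reindex (finCongr h)
      have heo := ((stdOrthonormalBasis ℂ K).reindex (finCongr h)).orthonormal
      have horth : Orthonormal ℂ
          (fun i : Fin n => (⟨((((stdOrthonormalBasis ℂ K).reindex (finCongr h)) i : H)),
            K.le_orthogonal_orthogonal (((stdOrthonormalBasis ℂ K).reindex (finCongr h)) i).2⟩ :
            (Kᗮᗮ : Submodule ℂ H))) :=
        ⟨fun i => heo.1 i, fun {i j} hij => heo.2 hij⟩
      exact family_of_orthonormal (A := A) _ horth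
    · -- no (n+1)-family
      rintro ⟨g, h1, h2, h3⟩
      obtain ⟨u, hu⟩ := exists_orthonormal_of_family g h1 h2 h3
      haveI : FiniteDimensional ℂ (Kᗮᗮ : Submodule ℂ H) := by rw [hWK]; exact hfd
      have hcard := hu.linearIndependent.fintype_card_le_finrank
      rw [Fintype.card_fin] at hcard
      rw [← hKdef] at hcard
      have hfr : Module.finrank ℂ (Kᗮᗮ : Submodule ℂ H) = n := by rw [hWK]; exact h
      omega
  · rintro ⟨⟨f, hf1, hf2, hf3⟩, hno⟩
    obtain ⟨u, hu⟩ := exists_orthonormal_of_family f hf1 hf2 hf3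
    have hnoLI : ∀ v : Fin (n + 1) → (Kᗮᗮ : Submodule ℂ H), ¬ LinearIndependent ℂ v := by
      intro v hv
      obtain ⟨u', hu'⟩ := exists_orthonormal_of_linearIndependent hv
      exact hno (family_of_orthonormal (A := A) u' hu')
    have hrank : Module.rank ℂ (Kᗮᗮ : Submodule ℂ H) ≤ n := by
      apply rank_le
      intro s hs
      by_contra hc
      push_neg at hc
      have hemb : Fintype.card (Fin (n + 1)) ≤ Fintype.card s := by
        simpa using Nat.succ_le_of_lt hc
      obtain ⟨emb⟩ := Function.Embedding.nonempty_iff_card_le.mpr hemb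
      exact hnoLI (fun i => ((emb i : s) : (Kᗮᗮ : Submodule ℂ H)))
        (hs.comp emb emb.injective)
    haveI hWfd : FiniteDimensional ℂ (Kᗮᗮ : Submodule ℂ H) :=
      Module.rank_lt_aleph0_iff.mp (hrank.trans_lt (Cardinal.nat_lt_aleph0 n))
    have hWle : Module.finrank ℂ (Kᗮᗮ : Submodule ℂ H) ≤ n := Module.finrank_le_of_rank_le hrank
    haveI : FiniteDimensional ℂ K :=
      Submodule.finiteDimensional_of_le K.le_orthogonal_orthogonal
    have hWK : Kᗮᗮ = K := le_antisymm
      (by rw [Submodule.orthogonal_orthogonal_eq_closure]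
          exact K.topologicalClosure_minimal le_rfl K.closed_of_finiteDimensional)
      K.le_orthogonal_orthogonal
    have hge : n ≤ Module.finrank ℂ (Kᗮᗮ : Submodule ℂ H) := by
      have := hu.linearIndependent.fintype_card_le_finrank
      simpa using this
    have hfr : Module.finrank ℂ (Kᗮᗮ : Submodule ℂ H) = Module.finrank ℂ K := by rw [hWK]
    omega
end

section
/- Let H be a complex Hilbert space and let X, Y ∈ S(H) be states. Then XY = 0 if and only if ‖X − Y‖₁ = 2. Consequently, every bijective map φ : S(H) → S(H) which preserves the trace-norm distance preserves orthogonality in both directions: XY = 0 if and only if φ(X)φ(Y) = 0. -/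
/-!
Common framework: operators on a complex Hilbert space `H`, the trace (computed in a
fixed orthonormal basis, which is basis-independent for positive operators), the set
`𝒟(H)` of density operators (positive trace-class operators), the set `S(H)` of states
(density operators of trace one), the trace norm `‖·‖₁`, the fidelity and the Bures
metric.
-/

set_option synthInstance.maxHeartbeats 1000000
set_option maxHeartbeats 1000000

open scoped InnerProductSpace

set_option linter.unusedSectionVars false
section AuxDev

open scoped InnerProductSpace

namespace StatesAux

variable {H : Type*} [NormedAddCommGroup H] [InnerProductSpace ℂ H] [CompleteSpace H]

/-- The fixed Hilbert basis underlying `hilbertBasisVectors`. -/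
noncomputable def bas : HilbertBasis (hilbertBasisVectors H) ℂ H :=
  (exists_hilbertBasis ℂ H).choose_spec.choose

lemma bas_apply (e : hilbertBasisVectors H) : bas (H := H) e = (e : H) :=
  congrFun (exists_hilbertBasis ℂ H).choose_spec.choose_spec e

/-- Parseval: `∑ₑ ⟪x, e⟫⟪e, y⟫ = ⟪x, y⟫`. -/
lemma hasSum_parseval (x y : H) :
    HasSum (fun e : hilbertBasisVectors H => ⟪x, (e : H)⟫_ℂ * ⟪(e : H), y⟫_ℂ) ⟪x, y⟫_ℂ := by
  simpa only [bas_apply] using (bas (H := H)).hasSum_inner_mul_inner x y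

/-- Parseval for norms. -/
lemma hasSum_parseval_norm (x : H) :
    HasSum (fun e : hilbertBasisVectors H => ‖⟪(e : H), x⟫_ℂ‖ ^ 2) (‖x‖ ^ 2) := by
  have h := (hasSum_parseval x x).mapL Complex.reCLM
  have h1 : (fun e : hilbertBasisVectors H =>
      Complex.reCLM (⟪x, (e : H)⟫_ℂ * ⟪(e : H), x⟫_ℂ)) =
      fun e : hilbertBasisVectors H => ‖⟪(e : H), x⟫_ℂ‖ ^ 2 := by
    funext e
    rw [← inner_conj_symm (↑e : H) x, Complex.mul_conj]
    rw [Complex.reCLM_apply, Complex.ofReal_re, Complex.normSq_eq_norm_sq,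
      RCLike.norm_conj]
  have h2 : Complex.reCLM (⟪x, x⟫_ℂ) = ‖x‖ ^ 2 := by
    simpa using inner_self_eq_norm_sq (𝕜 := ℂ) x
  rwa [h1, h2] at h

end StatesAux

namespace StatesAux

variable {H : Type*} [NormedAddCommGroup H] [InnerProductSpace ℂ H] [CompleteSpace H]

/-- The diagonal entry of `T` at a basis vector. -/
noncomputable def diag (T : H →L[ℂ] H) (e : hilbertBasisVectors H) : ℂ := ⟪(e : H), T e⟫_ℂ

lemma opTrace_def (T : H →L[ℂ] H) : opTrace T = ∑' e, (diag T e).re := rfl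

lemma traceSummable_def (T : H →L[ℂ] H) :
    TraceSummable T ↔ Summable fun e => (diag T e).re := Iff.rfl

lemma diag_add (A B : H →L[ℂ] H) (e : hilbertBasisVectors H) :
    diag (A + B) e = diag A e + diag B e := by
  simp [diag, ContinuousLinearMap.add_apply, inner_add_right]

lemma diag_sub (A B : H →L[ℂ] H) (e : hilbertBasisVectors H) :
    diag (A - B) e = diag A e - diag B e := by
  simp [diag, ContinuousLinearMap.sub_apply, inner_sub_right]

lemma diag_re_nonneg {T : H →L[ℂ] H} (hT : 0 ≤ T) (e : hilbertBasisVectors H) :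
    0 ≤ (diag T e).re := by
  have := ((ContinuousLinearMap.nonneg_iff_isPositive T).mp hT).re_inner_nonneg_right (e : H)
  simpa [diag] using this

lemma diag_re_mono {S T : H →L[ℂ] H} (h : S ≤ T) (e : hilbertBasisVectors H) :
    (diag S e).re ≤ (diag T e).re := by
  have h0 : (0 : H →L[ℂ] H) ≤ T - S := sub_nonneg.mpr h
  have := diag_re_nonneg h0 e
  rw [diag_sub, Complex.sub_re] at this
  linarith

lemma traceSummable_of_le {S T : H →L[ℂ] H} (h0 : 0 ≤ S) (h : S ≤ T)
    (hT : TraceSummable T) : TraceSummable S :=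
  Summable.of_nonneg_of_le (diag_re_nonneg h0) (diag_re_mono h) hT

lemma opTrace_add {A B : H →L[ℂ] H} (hA : TraceSummable A) (hB : TraceSummable B) :
    opTrace (A + B) = opTrace A + opTrace B := by
  have h : ∀ e, (diag (A + B) e).re = (diag A e).re + (diag B e).re := fun e => by
    rw [diag_add, Complex.add_re]
  rw [opTrace_def, opTrace_def, opTrace_def, tsum_congr h]
  exact Summable.tsum_add hA hB

lemma traceSummable_add {A B : H →L[ℂ] H} (hA : TraceSummable A) (hB : TraceSummable B) :
    TraceSummable (A + B) := by
  rw [traceSummable_def]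
  exact (hA.add hB).congr fun e => by simp only [diag_add, Complex.add_re]; rfl

lemma opTrace_nonneg {T : H →L[ℂ] H} (hT : 0 ≤ T) : 0 ≤ opTrace T :=
  tsum_nonneg (diag_re_nonneg hT)

lemma opTrace_mono {S T : H →L[ℂ] H} (h : S ≤ T) (hS : TraceSummable S)
    (hT : TraceSummable T) : opTrace S ≤ opTrace T :=
  Summable.tsum_le_tsum (diag_re_mono h) hS hT

/-- Hilbert–Schmidt (square-summable over the fixed basis). -/
abbrev HS (A : H →L[ℂ] H) : Prop :=
  Summable fun e : hilbertBasisVectors H => ‖A e‖ ^ 2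

lemma HS.star_op {A : H →L[ℂ] H} (hA : HS A) : HS (star A) := by
  rw [ContinuousLinearMap.star_eq_adjoint]
  have key : Summable fun f : hilbertBasisVectors H =>
      ∑' e : hilbertBasisVectors H, ‖⟪(f : H), A e⟫_ℂ‖ ^ 2 := by
    have hnn : 0 ≤ fun p : hilbertBasisVectors H × hilbertBasisVectors H =>
        ‖⟪(p.2 : H), A p.1⟫_ℂ‖ ^ 2 := fun p => by positivity
    have hprod : Summable fun p : hilbertBasisVectors H × hilbertBasisVectors H =>
        ‖⟪(p.2 : H), A p.1⟫_ℂ‖ ^ 2 := by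
      rw [summable_prod_of_nonneg hnn]
      constructor
      · intro e; exact (hasSum_parseval_norm (A e)).summable
      · apply hA.congr; intro e
        exact ((hasSum_parseval_norm (A e)).tsum_eq).symm
    have hswap := hprod.prod_symm
    have hnn' : 0 ≤ fun p : hilbertBasisVectors H × hilbertBasisVectors H =>
        ‖⟪(p.1 : H), A p.2⟫_ℂ‖ ^ 2 := fun p => by positivity
    exact ((summable_prod_of_nonneg hnn').mp hswap).2
  apply key.congr
  intro f
  have h1 := (hasSum_parseval_norm ((ContinuousLinearMap.adjoint A) (f : H))).tsum_eq
  rw [← h1]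
  congr 1; funext e
  rw [ContinuousLinearMap.adjoint_inner_right, norm_inner_symm]

lemma HS.mul_left {A B : H →L[ℂ] H} (hB : HS B) : HS (A * B) := by
  refine Summable.of_nonneg_of_le (fun e => by positivity) (fun e => ?_)
    (Summable.mul_left (‖A‖ ^ 2) hB)
  rw [ContinuousLinearMap.mul_apply]
  calc ‖A (B e)‖ ^ 2 ≤ (‖A‖ * ‖B e‖) ^ 2 := by
        have := A.le_opNorm (B e)
        have h0 : (0:ℝ) ≤ ‖A (B e)‖ := norm_nonneg _
        nlinarith
    _ = ‖A‖ ^ 2 * ‖B e‖ ^ 2 := by ring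

lemma HS.mul_right {A B : H →L[ℂ] H} (hA : HS A) : HS (A * B) := by
  have h : HS (star B * star A) := HS.mul_left hA.star_op
  have := h.star_op
  rwa [star_mul, star_star, star_star] at this

lemma summable_norm_diag_mul {A B : H →L[ℂ] H} (hA' : HS (star A)) (hB : HS B) :
    Summable fun e => ‖diag (A * B) e‖ := by
  refine Summable.of_nonneg_of_le (fun e => norm_nonneg _) (fun e => ?_)
    ((hA'.add hB).div_const 2)
  have h1 : diag (A * B) e = ⟪(star A) (e : H), B (e : H)⟫_ℂ := by
    rw [diag, ContinuousLinearMap.mul_apply, ContinuousLinearMap.star_eq_adjoint,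
      ContinuousLinearMap.adjoint_inner_left]
  rw [h1]
  calc ‖⟪(star A) (e : H), B (e : H)⟫_ℂ‖ ≤ ‖(star A) (e : H)‖ * ‖B (e : H)‖ :=
        norm_inner_le_norm _ _
    _ ≤ (‖(star A) (e : H)‖ ^ 2 + ‖B (e : H)‖ ^ 2) / 2 := by nlinarith [sq_nonneg (‖(star A) (e : H)‖ - ‖B (e : H)‖)]

lemma traceSummable_of_summable_norm_diag {T : H →L[ℂ] H}
    (h : Summable fun e => ‖diag T e‖) : TraceSummable T := by
  rw [traceSummable_def]
  exact ((h.of_norm).hasSum.mapL Complex.reCLM).summable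

lemma opTrace_eq_re_tsum {T : H →L[ℂ] H} (h : Summable fun e => ‖diag T e‖) :
    opTrace T = (∑' e, diag T e).re := by
  rw [opTrace_def]
  exact ((h.of_norm).hasSum.mapL Complex.reCLM).tsum_eq

lemma summable_parseval (x y : H) :
    Summable fun f : hilbertBasisVectors H => ⟪x, (f : H)⟫_ℂ * ⟪(f : H), y⟫_ℂ :=
  (hasSum_parseval x y).summable

lemma tsum_diag_mul_comm {A B : H →L[ℂ] H} (hA : HS A) (hB : HS B) :
    ∑' e, diag (A * B) e = ∑' e, diag (B * A) e := by
  set u : hilbertBasisVectors H → hilbertBasisVectors H → ℂ :=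
    fun e f => ⟪(e : H), A f⟫_ℂ * ⟪(f : H), B (e : H)⟫_ℂ with hu
  have step1 : ∀ e, diag (A * B) e = ∑' f, u e f := by
    intro e
    have h1 : diag (A * B) e = ⟪(star A) (e : H), B (e : H)⟫_ℂ := by
      rw [diag, ContinuousLinearMap.mul_apply, ContinuousLinearMap.star_eq_adjoint,
        ContinuousLinearMap.adjoint_inner_left]
    rw [h1, ← (hasSum_parseval ((star A) (e : H)) (B (e : H))).tsum_eq]
    congr 1; funext f
    rw [hu, ContinuousLinearMap.star_eq_adjoint, ContinuousLinearMap.adjoint_inner_left]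
  have step2 : ∀ f, diag (B * A) f = ∑' e, u e f := by
    intro f
    have h1 : diag (B * A) f = ⟪(star B) (f : H), A (f : H)⟫_ℂ := by
      rw [diag, ContinuousLinearMap.mul_apply, ContinuousLinearMap.star_eq_adjoint,
        ContinuousLinearMap.adjoint_inner_left]
    rw [h1, ← (hasSum_parseval ((star B) (f : H)) (A (f : H))).tsum_eq]
    congr 1; funext e
    rw [hu, ContinuousLinearMap.star_eq_adjoint, ContinuousLinearMap.adjoint_inner_left]
    ring
  have hS1 : Summable fun p : hilbertBasisVectors H × hilbertBasisVectors H =>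
      ‖⟪(p.2 : H), A p.1⟫_ℂ‖ ^ 2 := by
    rw [summable_prod_of_nonneg (fun p => by positivity)]
    constructor
    · intro e; exact (hasSum_parseval_norm (A e)).summable
    · apply hA.congr; intro e; exact ((hasSum_parseval_norm (A e)).tsum_eq).symm
  have hS2 : Summable fun p : hilbertBasisVectors H × hilbertBasisVectors H =>
      ‖⟪(p.2 : H), B p.1⟫_ℂ‖ ^ 2 := by
    rw [summable_prod_of_nonneg (fun p => by positivity)]
    constructor
    · intro e; exact (hasSum_parseval_norm (B e)).summable
    · apply hB.congr; intro e; exact ((hasSum_parseval_norm (B e)).tsum_eq).symm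
  have hunc : Summable (Function.uncurry u) := by
    apply Summable.of_norm
    refine Summable.of_nonneg_of_le (fun p => norm_nonneg _) (fun p => ?_)
      ((hS1.prod_symm.add hS2).div_const 2)
    obtain ⟨e, f⟩ := p
    simp only [Function.uncurry, hu, Prod.swap]
    rw [norm_mul]
    nlinarith [sq_nonneg (‖⟪(e : H), A f⟫_ℂ‖ - ‖⟪(f : H), B (e : H)⟫_ℂ‖),
      norm_nonneg (⟪(e : H), A f⟫_ℂ), norm_nonneg (⟪(f : H), B (e : H)⟫_ℂ)]
  have h₁ : ∀ e, Summable (u e) := by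
    intro e
    apply (summable_parseval ((star A) (e : H)) (B (e : H))).congr
    intro f
    rw [hu, ContinuousLinearMap.star_eq_adjoint, ContinuousLinearMap.adjoint_inner_left]
  have h₂ : ∀ f, Summable fun e => u e f := by
    intro f
    apply (summable_parseval ((star B) (f : H)) (A (f : H))).congr
    intro e
    rw [hu, ContinuousLinearMap.star_eq_adjoint, ContinuousLinearMap.adjoint_inner_left]
    ring
  have hcomm := Summable.tsum_comm' hunc h₁ h₂
  calc ∑' e, diag (A * B) e = ∑' e, ∑' f, u e f := by
        congr 1; funext e; exact step1 e
    _ = ∑' f, ∑' e, u e f := hcomm.symm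
    _ = ∑' f, diag (B * A) f := by congr 1; funext f; exact (step2 f).symm

lemma opTrace_mul_comm {A B : H →L[ℂ] H} (hA : HS A) (hA' : HS (star A))
    (hB : HS B) (hB' : HS (star B)) : opTrace (A * B) = opTrace (B * A) := by
  rw [opTrace_eq_re_tsum (summable_norm_diag_mul hA' hB),
    opTrace_eq_re_tsum (summable_norm_diag_mul hB' hA), tsum_diag_mul_comm hA hB]

end StatesAux

namespace StatesAux

variable {H : Type*} [NormedAddCommGroup H] [InnerProductSpace ℂ H] [CompleteSpace H]

lemma selfAdjoint_inner_comm {A : H →L[ℂ] H} (hA : IsSelfAdjoint A) (x y : H) :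
    ⟪x, A y⟫_ℂ = ⟪A x, y⟫_ℂ := by
  have := (ContinuousLinearMap.isSelfAdjoint_iff_isSymmetric.mp hA) x y
  exact this.symm

lemma diag_re_eq_sq_sqrt {T : H →L[ℂ] H} (hT : 0 ≤ T) (e : hilbertBasisVectors H) :
    (diag T e).re = ‖CFC.sqrt T (e : H)‖ ^ 2 := by
  have hS : IsSelfAdjoint (CFC.sqrt T) := IsSelfAdjoint.of_nonneg (CFC.sqrt_nonneg T)
  conv_lhs => rw [← CFC.sqrt_mul_sqrt_self T hT]
  rw [diag, ContinuousLinearMap.mul_apply, selfAdjoint_inner_comm hS]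
  simpa using inner_self_eq_norm_sq (𝕜 := ℂ) (CFC.sqrt T (e : H))

lemma hs_sqrt {T : H →L[ℂ] H} (hT : 0 ≤ T) (hTs : TraceSummable T) :
    HS (CFC.sqrt T) :=
  hTs.congr fun e => diag_re_eq_sq_sqrt hT e

lemma tsum_sq_sqrt {T : H →L[ℂ] H} (hT : 0 ≤ T) :
    ∑' e : hilbertBasisVectors H, ‖CFC.sqrt T (e : H)‖ ^ 2 = opTrace T := by
  rw [opTrace_def]
  exact tsum_congr fun e => (diag_re_eq_sq_sqrt hT e).symm

lemma opNorm_sq_le_tsum {A : H →L[ℂ] H} (hA : IsSelfAdjoint A) (hs : HS A) :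
    ‖A‖ ^ 2 ≤ ∑' e : hilbertBasisVectors H, ‖A (e : H)‖ ^ 2 := by
  set S : ℝ := ∑' e : hilbertBasisVectors H, ‖A (e : H)‖ ^ 2 with hSdef
  have hS0 : 0 ≤ S := tsum_nonneg fun e => by positivity
  have key : ∀ x : H, ‖A x‖ ^ 2 ≤ S * ‖x‖ ^ 2 := by
    intro x
    have h1 : ‖A x‖ ^ 2 = ∑' f : hilbertBasisVectors H, ‖⟪(f : H), A x⟫_ℂ‖ ^ 2 :=
      (hasSum_parseval_norm (A x)).tsum_eq.symm
    rw [h1]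
    have h2 : ∀ f : hilbertBasisVectors H,
        ‖⟪(f : H), A x⟫_ℂ‖ ^ 2 ≤ ‖A (f : H)‖ ^ 2 * ‖x‖ ^ 2 := by
      intro f
      rw [selfAdjoint_inner_comm hA]
      have := norm_inner_le_norm (𝕜 := ℂ) (A (f : H)) x
      nlinarith [norm_nonneg (⟪A (f : H), x⟫_ℂ), norm_nonneg (A (f : H)), norm_nonneg x]
    calc ∑' f : hilbertBasisVectors H, ‖⟪(f : H), A x⟫_ℂ‖ ^ 2
        ≤ ∑' f : hilbertBasisVectors H, ‖A (f : H)‖ ^ 2 * ‖x‖ ^ 2 :=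
          Summable.tsum_le_tsum h2 (hasSum_parseval_norm (A x)).summable (Summable.mul_right _ hs)
      _ = S * ‖x‖ ^ 2 := by rw [tsum_mul_right]
  have hb : ‖A‖ ≤ Real.sqrt S := by
    apply ContinuousLinearMap.opNorm_le_bound _ (Real.sqrt_nonneg S)
    intro x
    have := key x
    have h3 : ‖A x‖ ≤ Real.sqrt (S * ‖x‖ ^ 2) := by
      rw [← Real.sqrt_sq (norm_nonneg (A x))]
      exact Real.sqrt_le_sqrt this
    rwa [Real.sqrt_mul hS0, Real.sqrt_sq (norm_nonneg x)] at h3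
  calc ‖A‖ ^ 2 ≤ Real.sqrt S ^ 2 := by
        have h0 : (0:ℝ) ≤ ‖A‖ := norm_nonneg _
        nlinarith [Real.sqrt_nonneg S]
    _ = S := Real.sq_sqrt hS0

lemma norm_le_opTrace {T : H →L[ℂ] H} (hT : 0 ≤ T) (hTs : TraceSummable T) :
    ‖T‖ ≤ opTrace T := by
  have hS : IsSelfAdjoint (CFC.sqrt T) := IsSelfAdjoint.of_nonneg (CFC.sqrt_nonneg T)
  have h1 : ‖T‖ = ‖CFC.sqrt T‖ ^ 2 := by
    conv_lhs => rw [← CFC.sqrt_mul_sqrt_self T hT]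
    nth_rewrite 1 [← hS.star_eq]
    rw [CStarRing.norm_star_mul_self, sq]
  rw [h1, ← tsum_sq_sqrt hT]
  exact opNorm_sq_le_tsum hS (hs_sqrt hT hTs)

/-! Real auxiliary functions for the functional calculus. -/

/-- positive part -/
def posf (t : ℝ) : ℝ := max t 0
/-- negative part -/
def negf (t : ℝ) : ℝ := max (-t) 0
/-- cutoff function -/
def ffn (n : ℕ) (t : ℝ) : ℝ := min 1 ((n + 1) * posf t)
/-- error function -/
def kfn (n : ℕ) (t : ℝ) : ℝ := posf t - ffn n t * posf t

lemma posf_continuous : Continuous posf := continuous_id.max continuous_const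
lemma negf_continuous : Continuous negf := continuous_neg.max continuous_const
lemma ffn_continuous (n : ℕ) : Continuous (ffn n) :=
  continuous_const.min (continuous_const.mul posf_continuous)
lemma kfn_continuous (n : ℕ) : Continuous (kfn n) :=
  posf_continuous.sub ((ffn_continuous n).mul posf_continuous)

lemma posf_nonneg (t : ℝ) : 0 ≤ posf t := le_max_right _ _
lemma negf_nonneg (t : ℝ) : 0 ≤ negf t := le_max_right _ _
lemma posf_sub_negf (t : ℝ) : posf t - negf t = t := by
  rcases le_total 0 t with h | h
  · rw [posf, negf, max_eq_left h, max_eq_right (by linarith)]; ring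
  · rw [posf, negf, max_eq_right h, max_eq_left (by linarith)]; ring
lemma posf_mul_negf (t : ℝ) : posf t * negf t = 0 := by
  rcases le_total 0 t with h | h
  · rw [negf, max_eq_right (by linarith), mul_zero]
  · rw [posf, max_eq_right h, zero_mul]
lemma posf_add_negf (t : ℝ) : posf t + negf t = |t| := by
  rcases le_total 0 t with h | h
  · rw [posf, negf, max_eq_left h, max_eq_right (by linarith), abs_of_nonneg h]; ring
  · rw [posf, negf, max_eq_right h, max_eq_left (by linarith), abs_of_nonpos h]; ring
lemma ffn_nonneg (n : ℕ) (t : ℝ) : 0 ≤ ffn n t :=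
  le_min zero_le_one (mul_nonneg (by positivity) (posf_nonneg t))
lemma ffn_le_one (n : ℕ) (t : ℝ) : ffn n t ≤ 1 := min_le_left _ _
lemma ffn_sq_le (n : ℕ) (t : ℝ) : ffn n t * ffn n t ≤ ffn n t := by
  nlinarith [ffn_nonneg n t, ffn_le_one n t]
lemma ffn_mul_negf (n : ℕ) (t : ℝ) : ffn n t * negf t = 0 := by
  rcases le_total 0 t with h | h
  · rw [negf, max_eq_right (by linarith), mul_zero]
  · have : posf t = 0 := max_eq_right h
    rw [ffn, this, mul_zero, min_eq_right zero_le_one, zero_mul]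
lemma kfn_nonneg (n : ℕ) (t : ℝ) : 0 ≤ kfn n t := by
  have h1 := ffn_le_one n t
  have h2 := posf_nonneg t
  rw [kfn]; nlinarith
lemma kfn_le_posf (n : ℕ) (t : ℝ) : kfn n t ≤ posf t := by
  have h1 := ffn_nonneg n t
  have h2 := posf_nonneg t
  rw [kfn]; nlinarith
lemma kfn_le (n : ℕ) (t : ℝ) : |kfn n t| ≤ 1 / (4 * (n + 1)) := by
  have hn : (0:ℝ) < n + 1 := by positivity
  rw [abs_of_nonneg (kfn_nonneg n t)]
  rcases le_total t 0 with h | h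
  · have hp : posf t = 0 := max_eq_right h
    rw [kfn, hp]; simp; positivity
  · have hp : posf t = t := max_eq_left h
    rw [kfn, hp]
    rcases le_total 1 ((n + 1) * t) with h2 | h2
    · rw [ffn, hp, min_eq_left h2]
      have : t - 1 * t = 0 := by ring
      rw [this]; positivity
    · rw [ffn, hp, min_eq_right h2, le_div_iff₀ (by positivity)]
      nlinarith [sq_nonneg (2 * ((n:ℝ) + 1) * t - 1)]
end StatesAux

namespace StatesAux

variable {H : Type*} [NormedAddCommGroup H] [InnerProductSpace ℂ H] [CompleteSpace H]

lemma basis_norm_one (e : hilbertBasisVectors H) : ‖(e : H)‖ = 1 := by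
  have h := (bas (H := H)).orthonormal.1 e
  rwa [bas_apply] at h

lemma diag_re_le_norm (T : H →L[ℂ] H) (e : hilbertBasisVectors H) :
    (diag T e).re ≤ ‖T‖ := by
  have h1 : (diag T e).re ≤ ‖diag T e‖ := Complex.re_le_norm _
  have h2 : ‖diag T e‖ ≤ ‖(e : H)‖ * ‖T (e : H)‖ := norm_inner_le_norm _ _
  have h3 : ‖T (e : H)‖ ≤ ‖T‖ * ‖(e : H)‖ := T.le_opNorm _
  have h4 := basis_norm_one e
  rw [h4, one_mul] at h2
  rw [h4, mul_one] at h3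
  linarith

section CFCOps

variable {a : H →L[ℂ] H} (ha : IsSelfAdjoint a)

/-- complement cutoff -/
def gfn (n : ℕ) (t : ℝ) : ℝ := 1 - ffn n t
lemma gfn_continuous (n : ℕ) : Continuous (gfn n) := continuous_const.sub (ffn_continuous n)
lemma gfn_nonneg (n : ℕ) (t : ℝ) : 0 ≤ gfn n t := by
  have := ffn_le_one n t; rw [gfn]; linarith
lemma gfn_le_one (n : ℕ) (t : ℝ) : gfn n t ≤ 1 := by
  have := ffn_nonneg n t; rw [gfn]; linarith
lemma gfn_sq_le (n : ℕ) (t : ℝ) : gfn n t * gfn n t ≤ gfn n t := by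
  nlinarith [gfn_nonneg n t, gfn_le_one n t]

include ha

lemma cfc_posf_nonneg : 0 ≤ cfc posf a := cfc_nonneg fun x _ => posf_nonneg x
lemma cfc_negf_nonneg : 0 ≤ cfc negf a := cfc_nonneg fun x _ => negf_nonneg x
lemma cfc_ffn_nonneg (n : ℕ) : 0 ≤ cfc (ffn n) a := cfc_nonneg fun x _ => ffn_nonneg n x
lemma cfc_kfn_nonneg (n : ℕ) : 0 ≤ cfc (kfn n) a := cfc_nonneg fun x _ => kfn_nonneg n x
lemma cfc_ffn_le_one (n : ℕ) : cfc (ffn n) a ≤ 1 :=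
  cfc_le_one _ _ fun x _ => ffn_le_one n x

lemma cfc_pos_sub_neg : cfc posf a - cfc negf a = a := by
  rw [← cfc_sub posf negf a (posf_continuous.continuousOn) (negf_continuous.continuousOn)]
  calc cfc (fun t => posf t - negf t) a = cfc (fun t : ℝ => t) a :=
        cfc_congr fun t _ => posf_sub_negf t
    _ = a := cfc_id' ℝ a

lemma cfc_ffn_mul_negf (n : ℕ) : cfc (ffn n) a * cfc negf a = 0 := by
  rw [← cfc_mul (ffn n) negf a ((ffn_continuous n).continuousOn) (negf_continuous.continuousOn)]
  calc cfc (fun t => ffn n t * negf t) a = cfc (fun _ : ℝ => (0:ℝ)) a :=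
        cfc_congr fun t _ => ffn_mul_negf n t
    _ = 0 := by simp

lemma cfc_ffn_mul_posf (n : ℕ) :
    cfc (ffn n) a * cfc posf a = cfc posf a - cfc (kfn n) a := by
  rw [← cfc_mul (ffn n) posf a ((ffn_continuous n).continuousOn) (posf_continuous.continuousOn),
    ← cfc_sub posf (kfn n) a (posf_continuous.continuousOn) ((kfn_continuous n).continuousOn)]
  exact cfc_congr fun t _ => by rw [kfn]; ring

lemma cfc_kfn_le_posf (n : ℕ) : cfc (kfn n) a ≤ cfc posf a :=
  cfc_mono (fun x _ => kfn_le_posf n x) ((kfn_continuous n).continuousOn)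
    (posf_continuous.continuousOn)

lemma cfc_kfn_norm_le (n : ℕ) : ‖cfc (kfn n) a‖ ≤ 1 / (4 * (n + 1)) := by
  apply norm_cfc_le (by positivity)
  intro x _
  rw [Real.norm_eq_abs]
  exact kfn_le n x

lemma cfc_ffn_sq_le (n : ℕ) : cfc (ffn n) a * cfc (ffn n) a ≤ cfc (ffn n) a := by
  rw [← cfc_mul (ffn n) (ffn n) a ((ffn_continuous n).continuousOn)
    ((ffn_continuous n).continuousOn)]
  exact cfc_mono (fun x _ => ffn_sq_le n x)
    (((ffn_continuous n).mul (ffn_continuous n)).continuousOn) ((ffn_continuous n).continuousOn)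

lemma cfc_gfn_eq (n : ℕ) : cfc (gfn n) a = 1 - cfc (ffn n) a := by
  rw [← cfc_one ℝ a, ← cfc_sub (1 : ℝ → ℝ) (ffn n) a (continuousOn_const)
    ((ffn_continuous n).continuousOn)]
  exact cfc_congr fun t _ => rfl

lemma cfc_gfn_sq_le (n : ℕ) : cfc (gfn n) a * cfc (gfn n) a ≤ cfc (gfn n) a := by
  rw [← cfc_mul (gfn n) (gfn n) a ((gfn_continuous n).continuousOn)
    ((gfn_continuous n).continuousOn)]
  exact cfc_mono (fun x _ => gfn_sq_le n x)
    (((gfn_continuous n).mul (gfn_continuous n)).continuousOn) ((gfn_continuous n).continuousOn)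

lemma cfc_gfn_nonneg (n : ℕ) : 0 ≤ cfc (gfn n) a := cfc_nonneg fun x _ => gfn_nonneg n x
lemma cfc_gfn_le_one (n : ℕ) : cfc (gfn n) a ≤ 1 :=
  cfc_le_one _ _ fun x _ => gfn_le_one n x

lemma sqrt_sq_abs : CFC.sqrt (star a * a) = cfc posf a + cfc negf a := by
  have habs : cfc posf a + cfc negf a = cfc (fun t : ℝ => |t|) a := by
    rw [← cfc_add a posf negf (posf_continuous.continuousOn) (negf_continuous.continuousOn)]
    exact cfc_congr fun t _ => posf_add_negf t
  have hbb : (cfc (fun t : ℝ => |t|) a) * (cfc (fun t : ℝ => |t|) a) = a * a := by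
    rw [← cfc_mul (fun t : ℝ => |t|) (fun t : ℝ => |t|) a (by fun_prop) (by fun_prop)]
    calc cfc (fun t : ℝ => |t| * |t|) a = cfc (fun t : ℝ => t * t) a :=
          cfc_congr fun t _ => abs_mul_abs_self t
      _ = a * a := by
          rw [cfc_mul (fun t : ℝ => t) (fun t : ℝ => t) a (by fun_prop) (by fun_prop),
            cfc_id' ℝ a]
  have hb0 : 0 ≤ cfc (fun t : ℝ => |t|) a := cfc_nonneg fun t _ => abs_nonneg t
  rw [ha.star_eq, habs]
  exact CFC.sqrt_unique hbb hb0

end CFCOps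

end StatesAux

end AuxDev

open StatesAux Filter

/-- Two states `X, Y ∈ S(H)` are orthogonal iff `‖X − Y‖₁ = 2`; consequently every
bijective trace-norm isometry of `S(H)` preserves orthogonality in both directions. -/
theorem states_orthogonal_iff_traceNorm_eq_two
    {H : Type*} [NormedAddCommGroup H] [InnerProductSpace ℂ H] [CompleteSpace H] :
    (∀ X ∈ states H, ∀ Y ∈ states H, (X * Y = 0 ↔ traceNorm (X - Y) = 2)) ∧
    (∀ φ : (H →L[ℂ] H) → (H →L[ℂ] H), Set.BijOn φ (states H) (states H) →
      (∀ A ∈ states H, ∀ B ∈ states H, traceNorm (φ A - φ B) = traceNorm (A - B)) →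
      ∀ X ∈ states H, ∀ Y ∈ states H, (X * Y = 0 ↔ φ X * φ Y = 0)) := by
  have main : ∀ X ∈ states H, ∀ Y ∈ states H, (X * Y = 0 ↔ traceNorm (X - Y) = 2) := by
    intro X hX Y hY
    obtain ⟨⟨hXp, hXs⟩, hX1⟩ := hX
    obtain ⟨⟨hYp, hYs⟩, hY1⟩ := hY
    have hXsa : IsSelfAdjoint X := hXp.isSelfAdjoint
    have hYsa : IsSelfAdjoint Y := hYp.isSelfAdjoint
    have hX0 : (0 : H →L[ℂ] H) ≤ X := (ContinuousLinearMap.nonneg_iff_isPositive X).mpr hXp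
    have hY0 : (0 : H →L[ℂ] H) ≤ Y := (ContinuousLinearMap.nonneg_iff_isPositive Y).mpr hYp
    have hΔsa : IsSelfAdjoint (X - Y) := hXsa.sub hYsa
    constructor
    · -- forward direction
      intro hXY
      have hYX : Y * X = 0 := by
        have h := congrArg star hXY
        rwa [star_mul, hXsa.star_eq, hYsa.star_eq, star_zero] at h
      have hsq : star (X - Y) * (X - Y) = (X + Y) * (X + Y) := by
        rw [hΔsa.star_eq]
        have h1 : (X - Y) * (X - Y) = X*X - X*Y - Y*X + Y*Y := by noncomm_ring
        have h2 : (X + Y) * (X + Y) = X*X + X*Y + Y*X + Y*Y := by noncomm_ring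
        rw [h1, h2, hXY, hYX]
        abel
      unfold traceNorm opAbs
      rw [hsq, CFC.sqrt_mul_self (X + Y) (add_nonneg hX0 hY0),
        opTrace_add hXs hYs, hX1, hY1]
      norm_num
    · -- backward direction
      intro htr2
      set Δ := X - Y with hΔ
      set pos := cfc posf Δ with hposdef
      set neg := cfc negf Δ with hnegdef
      unfold traceNorm opAbs at htr2
      rw [sqrt_sq_abs hΔsa] at htr2
      -- htr2 : opTrace (pos + neg) = 2
      have hsum_abs : TraceSummable (pos + neg) := by
        by_contra hns
        rw [traceSummable_def] at hns
        rw [opTrace_def, tsum_eq_zero_of_not_summable hns] at htr2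
        norm_num at htr2
      have hpos0 : (0 : H →L[ℂ] H) ≤ pos := cfc_posf_nonneg hΔsa
      have hneg0 : (0 : H →L[ℂ] H) ≤ neg := cfc_negf_nonneg hΔsa
      have hpos_s : TraceSummable pos :=
        traceSummable_of_le hpos0 (le_add_of_nonneg_right hneg0) hsum_abs
      have hneg_s : TraceSummable neg :=
        traceSummable_of_le hneg0 (le_add_of_nonneg_left hpos0) hsum_abs
      have htr_add : opTrace pos + opTrace neg = 2 := by
        rw [← opTrace_add hpos_s hneg_s]; exact htr2
      have hdecomp : pos - neg = Δ := cfc_pos_sub_neg hΔsa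
      have hXposY : pos + Y = X + neg := by
        refine (sub_eq_sub_iff_add_eq_add).mp ?_
        rw [hdecomp, hΔ]
      have htr_eq : opTrace pos + opTrace Y = opTrace X + opTrace neg := by
        rw [← opTrace_add hpos_s hYs, ← opTrace_add hXs hneg_s, hXposY]
      have hpos1 : opTrace pos = 1 := by rw [hX1, hY1] at htr_eq; linarith
      set sX := CFC.sqrt X with hsXdef
      set sY := CFC.sqrt Y with hsYdef
      have hsX0 : (0 : H →L[ℂ] H) ≤ sX := CFC.sqrt_nonneg X
      have hsY0 : (0 : H →L[ℂ] H) ≤ sY := CFC.sqrt_nonneg Y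
      have hsXsa : IsSelfAdjoint sX := IsSelfAdjoint.of_nonneg hsX0
      have hsYsa : IsSelfAdjoint sY := IsSelfAdjoint.of_nonneg hsY0
      have hsXHS : HS sX := hs_sqrt hX0 hXs
      have hsYHS : HS sY := hs_sqrt hY0 hYs
      have hsXmul : sX * sX = X := CFC.sqrt_mul_sqrt_self X hX0
      have hsYmul : sY * sY = Y := CFC.sqrt_mul_sqrt_self Y hY0
      have key : ∀ n : ℕ, ‖X * Y‖ ≤ (‖sX‖ * ‖Y‖ + ‖X‖ * ‖sY‖) *
          Real.sqrt (opTrace (cfc (kfn n) Δ)) := by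
        intro n
        set P := cfc (ffn n) Δ with hPdef
        set K := cfc (kfn n) Δ with hKdef
        have hP0 : (0 : H →L[ℂ] H) ≤ P := cfc_ffn_nonneg hΔsa n
        have hP1 : P ≤ 1 := cfc_ffn_le_one hΔsa n
        have hPsa : IsSelfAdjoint P := IsSelfAdjoint.of_nonneg hP0
        have hK0 : (0 : H →L[ℂ] H) ≤ K := cfc_kfn_nonneg hΔsa n
        have hKpos : K ≤ pos := cfc_kfn_le_posf hΔsa n
        have hKs : TraceSummable K := traceSummable_of_le hK0 hKpos hpos_s
        have hPn : P * neg = 0 := cfc_ffn_mul_negf hΔsa n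
        have hPp : P * pos = pos - K := cfc_ffn_mul_posf hΔsa n
        have hPX : P * X = (pos - K) + P * Y := by
          have h1 : P * (pos - neg) = P * pos - P * neg := by rw [mul_sub]
          rw [hPn, hPp, sub_zero, hdecomp, hΔ, mul_sub] at h1
          exact sub_eq_iff_eq_add.mp h1
        have hSY0 : (0 : H →L[ℂ] H) ≤ sY * P * sY := by
          have h := star_left_conjugate_nonneg hP0 sY
          rwa [hsYsa.star_eq] at h
        have hSYle : sY * P * sY ≤ Y := by
          have h := star_left_conjugate_le_conjugate hP1 sY
          rwa [hsYsa.star_eq, mul_one, hsYmul] at h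
        have hSYs : TraceSummable (sY * P * sY) := traceSummable_of_le hSY0 hSYle hYs
        have hSX0 : (0 : H →L[ℂ] H) ≤ sX * P * sX := by
          have h := star_left_conjugate_nonneg hP0 sX
          rwa [hsXsa.star_eq] at h
        have hSXle : sX * P * sX ≤ X := by
          have h := star_left_conjugate_le_conjugate hP1 sX
          rwa [hsXsa.star_eq, mul_one, hsXmul] at h
        have hSXs : TraceSummable (sX * P * sX) := traceSummable_of_le hSX0 hSXle hXs
        have hQ0 : (0 : H →L[ℂ] H) ≤ 1 - P := sub_nonneg.mpr hP1
        have hQsa : IsSelfAdjoint (1 - P) := IsSelfAdjoint.of_nonneg hQ0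
        have hTX0 : (0 : H →L[ℂ] H) ≤ sX * (1 - P) * sX := by
          have h := star_left_conjugate_nonneg hQ0 sX
          rwa [hsXsa.star_eq] at h
        have hXsplit : sX * P * sX + sX * (1 - P) * sX = X := by
          have h : sX * P * sX + sX * (1 - P) * sX = sX * sX := by noncomm_ring
          rw [h, hsXmul]
        have hTXle : sX * (1 - P) * sX ≤ X := by
          calc sX * (1 - P) * sX ≤ sX * P * sX + sX * (1 - P) * sX :=
                le_add_of_nonneg_left hSX0
            _ = X := hXsplit
        have hTXs : TraceSummable (sX * (1 - P) * sX) := traceSummable_of_le hTX0 hTXle hXs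
        have hPsY : HS (P * sY) := HS.mul_left hsYHS
        have hPsY' : HS (star (P * sY)) := by
          rw [star_mul, hPsa.star_eq, hsYsa.star_eq]
          exact HS.mul_right hsYHS
        have hsYstar : HS (star sY) := by rw [hsYsa.star_eq]; exact hsYHS
        have hfactY : P * Y = (P * sY) * sY := by rw [mul_assoc, hsYmul]
        have htPY : opTrace (P * Y) = opTrace (sY * P * sY) := by
          rw [hfactY, opTrace_mul_comm hPsY hPsY' hsYHS hsYstar, ← mul_assoc]
        have hPsX : HS (P * sX) := HS.mul_left hsXHS
        have hPsX' : HS (star (P * sX)) := by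
          rw [star_mul, hPsa.star_eq, hsXsa.star_eq]
          exact HS.mul_right hsXHS
        have hsXstar : HS (star sX) := by rw [hsXsa.star_eq]; exact hsXHS
        have hfactX : P * X = (P * sX) * sX := by rw [mul_assoc, hsXmul]
        have htPX : opTrace (P * X) = opTrace (sX * P * sX) := by
          rw [hfactX, opTrace_mul_comm hPsX hPsX' hsXHS hsXstar, ← mul_assoc]
        have hPYs : TraceSummable (P * Y) := by
          rw [hfactY]
          exact traceSummable_of_summable_norm_diag (summable_norm_diag_mul hPsY' hsYHS)
        have hposK0 : (0 : H →L[ℂ] H) ≤ pos - K := sub_nonneg.mpr hKpos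
        have hposKle : pos - K ≤ pos := sub_le_self pos hK0
        have hposKs : TraceSummable (pos - K) := traceSummable_of_le hposK0 hposKle hpos_s
        have htrK : opTrace (pos - K) + opTrace K = 1 := by
          rw [← opTrace_add hposKs hKs, sub_add_cancel, hpos1]
        set α := opTrace (sY * P * sY) with hαdef
        set β := opTrace (sX * (1 - P) * sX) with hβdef
        set ε := opTrace K with hεdef
        have hα0 : 0 ≤ α := opTrace_nonneg hSY0
        have hβ0 : 0 ≤ β := opTrace_nonneg hTX0
        have hε0 : 0 ≤ ε := opTrace_nonneg hK0
        have htr_main : opTrace (sX * P * sX) = (1 - ε) + α := by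
          rw [← htPX, hPX, opTrace_add hposKs hPYs, htPY]
          have h : opTrace (pos - K) = 1 - ε := by linarith
          rw [h]
        have hsplit_tr : opTrace (sX * P * sX) + β = 1 := by
          rw [hβdef, ← opTrace_add hSXs hTXs, hXsplit, hX1]
        have hβεα : β = ε - α := by rw [htr_main] at hsplit_tr; linarith
        have hαε : α ≤ ε := by linarith
        have hβε : β ≤ ε := by linarith
        have hnPY : ‖P * sY‖ ^ 2 ≤ α := by
          have h0 : star (P * sY) * (P * sY) = sY * (P * P) * sY := by
            rw [star_mul, hPsa.star_eq, hsYsa.star_eq]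
            noncomm_ring
          have h1 : ‖P * sY‖ ^ 2 = ‖sY * (P * P) * sY‖ := by
            rw [sq, ← CStarRing.norm_star_mul_self, h0]
          have hPP : P * P ≤ P := cfc_ffn_sq_le hΔsa n
          have hPP0 : (0 : H →L[ℂ] H) ≤ sY * (P * P) * sY := by
            have h2 : (0 : H →L[ℂ] H) ≤ P * P := by
              have h3 := star_mul_self_nonneg P
              rwa [hPsa.star_eq] at h3
            have h4 := star_left_conjugate_nonneg h2 sY
            rwa [hsYsa.star_eq] at h4
          have hle : sY * (P * P) * sY ≤ sY * P * sY := by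
            have h5 := star_left_conjugate_le_conjugate hPP sY
            rwa [hsYsa.star_eq] at h5
          calc ‖P * sY‖ ^ 2 = ‖sY * (P * P) * sY‖ := h1
            _ ≤ ‖sY * P * sY‖ := CStarAlgebra.norm_le_norm_of_nonneg_of_le hPP0 hle
            _ ≤ α := norm_le_opTrace hSY0 hSYs
        have hnTX : ‖(1 - P) * sX‖ ^ 2 ≤ β := by
          have hgfneq : cfc (gfn n) Δ = 1 - P := cfc_gfn_eq hΔsa n
          have hQQ : (1 - P) * (1 - P) ≤ 1 - P := by
            have h5 := cfc_gfn_sq_le hΔsa n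
            rwa [hgfneq] at h5
          have h0 : star ((1 - P) * sX) * ((1 - P) * sX) = sX * ((1 - P) * (1 - P)) * sX := by
            rw [star_mul, hQsa.star_eq, hsXsa.star_eq]
            noncomm_ring
          have h1 : ‖(1 - P) * sX‖ ^ 2 = ‖sX * ((1 - P) * (1 - P)) * sX‖ := by
            rw [sq, ← CStarRing.norm_star_mul_self, h0]
          have hQQ0 : (0 : H →L[ℂ] H) ≤ sX * ((1 - P) * (1 - P)) * sX := by
            have h2 : (0 : H →L[ℂ] H) ≤ (1 - P) * (1 - P) := by
              have h3 := star_mul_self_nonneg (1 - P)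
              rwa [hQsa.star_eq] at h3
            have h4 := star_left_conjugate_nonneg h2 sX
            rwa [hsXsa.star_eq] at h4
          have hle : sX * ((1 - P) * (1 - P)) * sX ≤ sX * (1 - P) * sX := by
            have h5 := star_left_conjugate_le_conjugate hQQ sX
            rwa [hsXsa.star_eq] at h5
          calc ‖(1 - P) * sX‖ ^ 2 = ‖sX * ((1 - P) * (1 - P)) * sX‖ := h1
            _ ≤ ‖sX * (1 - P) * sX‖ := CStarAlgebra.norm_le_norm_of_nonneg_of_le hQQ0 hle
            _ ≤ β := norm_le_opTrace hTX0 hTXs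
        have hsqrtPY : ‖P * sY‖ ≤ Real.sqrt ε := by
          rw [← Real.sqrt_sq (norm_nonneg (P * sY))]
          exact Real.sqrt_le_sqrt (le_trans hnPY hαε)
        have hsqrtTX : ‖(1 - P) * sX‖ ≤ Real.sqrt ε := by
          rw [← Real.sqrt_sq (norm_nonneg ((1 - P) * sX))]
          exact Real.sqrt_le_sqrt (le_trans hnTX hβε)
        have hXYdecomp : X * Y = X * (1 - P) * Y + X * P * Y := by noncomm_ring
        have hb1 : ‖X * (1 - P) * Y‖ ≤ ‖sX‖ * ‖Y‖ * Real.sqrt ε := by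
          have hfact : X * (1 - P) * Y = sX * ((sX * (1 - P)) * Y) := by
            rw [← hsXmul]; noncomm_ring
          have h2 : ‖sX * (1 - P)‖ ≤ Real.sqrt ε := by
            rw [← norm_star (sX * (1 - P)), star_mul, hQsa.star_eq, hsXsa.star_eq]
            exact hsqrtTX
          calc ‖X * (1 - P) * Y‖ = ‖sX * ((sX * (1 - P)) * Y)‖ := by rw [hfact]
            _ ≤ ‖sX‖ * ‖(sX * (1 - P)) * Y‖ := norm_mul_le _ _
            _ ≤ ‖sX‖ * (‖sX * (1 - P)‖ * ‖Y‖) :=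
                mul_le_mul_of_nonneg_left (norm_mul_le _ _) (norm_nonneg sX)
            _ ≤ ‖sX‖ * (Real.sqrt ε * ‖Y‖) := by
                refine mul_le_mul_of_nonneg_left ?_ (norm_nonneg sX)
                exact mul_le_mul_of_nonneg_right h2 (norm_nonneg Y)
            _ = ‖sX‖ * ‖Y‖ * Real.sqrt ε := by ring
        have hb2 : ‖X * P * Y‖ ≤ ‖X‖ * ‖sY‖ * Real.sqrt ε := by
          have hfact : X * P * Y = (X * (P * sY)) * sY := by
            rw [← hsYmul]; noncomm_ring
          calc ‖X * P * Y‖ = ‖(X * (P * sY)) * sY‖ := by rw [hfact]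
            _ ≤ ‖X * (P * sY)‖ * ‖sY‖ := norm_mul_le _ _
            _ ≤ (‖X‖ * ‖P * sY‖) * ‖sY‖ :=
                mul_le_mul_of_nonneg_right (norm_mul_le _ _) (norm_nonneg sY)
            _ ≤ (‖X‖ * Real.sqrt ε) * ‖sY‖ := by
                refine mul_le_mul_of_nonneg_right ?_ (norm_nonneg sY)
                exact mul_le_mul_of_nonneg_left hsqrtPY (norm_nonneg X)
            _ = ‖X‖ * ‖sY‖ * Real.sqrt ε := by ring
        calc ‖X * Y‖ ≤ ‖X * (1 - P) * Y‖ + ‖X * P * Y‖ := by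
              rw [hXYdecomp]; exact norm_add_le _ _
          _ ≤ ‖sX‖ * ‖Y‖ * Real.sqrt ε + ‖X‖ * ‖sY‖ * Real.sqrt ε := add_le_add hb1 hb2
          _ = (‖sX‖ * ‖Y‖ + ‖X‖ * ‖sY‖) * Real.sqrt ε := by ring
      have hεlim : Tendsto (fun n : ℕ => opTrace (cfc (kfn n) Δ)) atTop (nhds 0) := by
        have hbound : Summable fun e : hilbertBasisVectors H => (diag pos e).re :=
          (traceSummable_def pos).mp hpos_s
        have hpt : ∀ e : hilbertBasisVectors H,
            Tendsto (fun n : ℕ => (diag (cfc (kfn n) Δ) e).re) atTop (nhds 0) := by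
          intro e
          apply squeeze_zero (fun n => diag_re_nonneg (cfc_kfn_nonneg hΔsa n) e)
            (g := fun n : ℕ => 1 / ((n : ℝ) + 1)) ?_ tendsto_one_div_add_atTop_nhds_zero_nat
          intro n
          calc (diag (cfc (kfn n) Δ) e).re ≤ ‖cfc (kfn n) Δ‖ := diag_re_le_norm _ e
            _ ≤ 1 / (4 * ((n : ℝ) + 1)) := cfc_kfn_norm_le hΔsa n
            _ ≤ 1 / ((n : ℝ) + 1) := by
                apply one_div_le_one_div_of_le (by positivity)
                nlinarith [Nat.cast_nonneg (α := ℝ) n]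
        have hbd : ∀ᶠ n : ℕ in atTop, ∀ e : hilbertBasisVectors H,
            ‖(diag (cfc (kfn n) Δ) e).re‖ ≤ (diag pos e).re := by
          apply Eventually.of_forall
          intro n e
          rw [Real.norm_eq_abs, abs_of_nonneg (diag_re_nonneg (cfc_kfn_nonneg hΔsa n) e)]
          exact diag_re_mono (cfc_kfn_le_posf hΔsa n) e
        have h := tendsto_tsum_of_dominated_convergence hbound hpt hbd
        simpa [opTrace_def] using h
      have hne : Tendsto (fun n : ℕ => (‖sX‖ * ‖Y‖ + ‖X‖ * ‖sY‖) *
          Real.sqrt (opTrace (cfc (kfn n) Δ))) atTop (nhds 0) := by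
        have hsq : Tendsto (fun n : ℕ => Real.sqrt (opTrace (cfc (kfn n) Δ)))
            atTop (nhds 0) := by
          have h := (Real.continuous_sqrt.tendsto 0).comp hεlim
          simpa [Function.comp_def] using h
        have h := hsq.const_mul (‖sX‖ * ‖Y‖ + ‖X‖ * ‖sY‖)
        simpa using h
      have hfin : ‖X * Y‖ ≤ 0 := ge_of_tendsto hne (Eventually.of_forall key)
      exact norm_le_zero_iff.mp hfin
  refine ⟨main, ?_⟩
  intro φ hbij hiso X hX Y hY
  rw [main X hX Y hY, ← hiso X hX Y hY,
    ← main (φ X) (hbij.mapsTo hX) (φ Y) (hbij.mapsTo hY)]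
end
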